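/- arXiv:2405.09652 — 5 statements merged into one kernel-verified Lean document; each statement's English description precedes it below -/
import Mathlib

section
/- Let 𝔤 be a nilpotent Lie algebra and x, y ∈ 𝔤. If [x,[x,y]] and [y,[x,y]] both lie in [L,[L,[L,L]]], where L is the Lie subalgebra generated by x and y, then every nested bracket in x and y of length at least 3 vanishes. -/
/-- `NestedBracket x y m z` means that `z` is a nested (iterated) Lie bracket in `x` and `y`
of length `m`, i.e. involving `m` occurrences of `x` or `y`. -/
inductive NestedBracket {𝔤 : Type*} [LieRing 𝔤] (x y : 𝔤) : ℕ → 𝔤 → Prop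
  | base_x : NestedBracket x y 1 x
  | base_y : NestedBracket x y 1 y
  | bracket {m m' : ℕ} {a b : 𝔤} : NestedBracket x y m a → NestedBracket x y m' b →
      NestedBracket x y (m + m') ⁅a, b⁆

/-- If a Lie algebra `L` is generated by `X` and `Y`, and `⁅X,⁅X,Y⁆⁆`, `⁅Y,⁅X,Y⁆⁆` lie in the
third term of the lower central series, then the second term is contained in the third. -/
lemma aux_lcs_le {K L : Type*} [Field K] [LieRing L] [LieAlgebra K L]
    (X Y : L) (hspan : LieSubalgebra.lieSpan K L {X, Y} = ⊤)
    (h1 : ⁅X, ⁅X, Y⁆⁆ ∈ LieModule.lowerCentralSeries K L L 3)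
    (h2 : ⁅Y, ⁅X, Y⁆⁆ ∈ LieModule.lowerCentralSeries K L L 3) :
    LieModule.lowerCentralSeries K L L 2 ≤ LieModule.lowerCentralSeries K L L 3 := by
  set N := LieModule.lowerCentralSeries K L L with hN
  have span_le : ∀ S : LieSubalgebra K L, X ∈ S → Y ∈ S → ∀ a : L, a ∈ S := by
    intro S hXS hYS a
    have hle : LieSubalgebra.lieSpan K L {X, Y} ≤ S := by
      rw [LieSubalgebra.lieSpan_le]; rintro g (rfl | rfl); exacts [hXS, hYS]
    exact hle (hspan ▸ trivial : a ∈ LieSubalgebra.lieSpan K L {X, Y})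
  have hN3 : ∀ (a : L) {n : L}, n ∈ N 3 → ⁅a, n⁆ ∈ N 3 := fun a _ hn => (N 3).lie_mem hn
  have claimA : ∀ a : L, ⁅a, ⁅X, Y⁆⁆ ∈ N 3 := by
    set SA : LieSubalgebra K L :=
      { carrier := {a : L | ⁅a, ⁅X, Y⁆⁆ ∈ N 3}
        add_mem' := fun {a b} ha hb => by
          simp only [Set.mem_setOf_eq, add_lie] at *; exact (N 3).add_mem ha hb
        zero_mem' := by simp only [Set.mem_setOf_eq, zero_lie]; exact (N 3).zero_mem
        smul_mem' := fun r {a} ha => by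
          simp only [Set.mem_setOf_eq, smul_lie] at *; exact (N 3).smul_mem r ha
        lie_mem' := fun {a b} ha hb => by
          simp only [Set.mem_setOf_eq, lie_lie] at *
          exact (N 3).sub_mem (hN3 a hb) (hN3 b ha) } with hSA
    exact span_le SA h1 h2
  set inM : L → Prop := fun c => ∀ a : L, ⁅a, c⁆ ∈ N 3 with hinM
  have inM_zero : inM 0 := fun a => by rw [lie_zero]; exact (N 3).zero_mem
  have inM_add : ∀ {c d}, inM c → inM d → inM (c + d) := fun {c d} hc hd a => by
    rw [lie_add]; exact (N 3).add_mem (hc a) (hd a)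
  have inM_smul : ∀ (r : K) {c}, inM c → inM (r • c) := fun r {c} hc a => by
    rw [lie_smul]; exact (N 3).smul_mem r (hc a)
  have inM_neg : ∀ {c}, inM c → inM (-c) := fun {c} hc a => by
    rw [lie_neg]; exact (N 3).neg_mem (hc a)
  have inM_sub : ∀ {c d}, inM c → inM d → inM (c - d) := fun {c d} hc hd => by
    rw [sub_eq_add_neg]; exact inM_add hc (inM_neg hd)
  have inM_lie : ∀ (b : L) {c}, inM c → inM ⁅b, c⁆ := fun b {c} hc a => by
    rw [leibniz_lie]; exact (N 3).add_mem (hc ⁅a, b⁆) (hN3 b (hc a))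
  have claimA' : inM ⁅X, Y⁆ := claimA
  have stepA : ∀ b : L, inM ⁅X, b⁆ → inM ⁅Y, b⁆ → ∀ a : L, inM ⁅a, b⁆ := by
    intro b hXb hYb
    set Sb : LieSubalgebra K L :=
      { carrier := {a : L | inM ⁅a, b⁆}
        add_mem' := fun {a c} ha hc => by
          simp only [Set.mem_setOf_eq, add_lie] at *; exact inM_add ha hc
        zero_mem' := by simp only [Set.mem_setOf_eq, zero_lie]; exact inM_zero
        smul_mem' := fun r {a} ha => by
          simp only [Set.mem_setOf_eq, smul_lie] at *; exact inM_smul r ha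
        lie_mem' := fun {a c} ha hc => by
          simp only [Set.mem_setOf_eq, lie_lie] at *
          exact inM_sub (inM_lie a hc) (inM_lie c ha) } with hSb
    exact span_le Sb hXb hYb
  have hXX : inM ⁅X, X⁆ := by rw [lie_self]; exact inM_zero
  have hYY : inM ⁅Y, Y⁆ := by rw [lie_self]; exact inM_zero
  have hYX : inM ⁅Y, X⁆ := by
    have h : ⁅Y, X⁆ = -⁅X, Y⁆ := by rw [← lie_skew]
    rw [h]; exact inM_neg claimA'
  have stepB : ∀ a b : L, inM ⁅a, b⁆ := by
    set SB : LieSubalgebra K L :=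
      { carrier := {b : L | ∀ a : L, inM ⁅a, b⁆}
        add_mem' := fun {b c} hb hc a => by
          rw [lie_add]; exact inM_add (hb a) (hc a)
        zero_mem' := fun a => by rw [lie_zero]; exact inM_zero
        smul_mem' := fun r {b} hb a => by rw [lie_smul]; exact inM_smul r (hb a)
        lie_mem' := fun {b c} hb hc a => by
          rw [leibniz_lie]; exact inM_add (hc ⁅a, b⁆) (inM_lie b (hc a)) } with hSB
    have hXSB : X ∈ SB := stepA X hXX hYX
    have hYSB : Y ∈ SB := stepA Y claimA' hYY
    intro a b
    exact span_le SB hXSB hYSB b a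
  set M' : LieSubmodule K L L :=
    { carrier := {c : L | inM c}
      add_mem' := fun ha hb => inM_add ha hb
      zero_mem' := inM_zero
      smul_mem' := fun r {c} hc => inM_smul r hc
      lie_mem := fun {b c} hc => inM_lie b hc } with hM'
  have h1M : N 1 ≤ M' := by
    rw [hN, LieModule.lowerCentralSeries_succ, LieSubmodule.lie_le_iff]
    intro a _ b _
    exact stepB a b
  have h2eq : N 2 = ⁅(⊤ : LieIdeal K L), N 1⁆ := LieModule.lowerCentralSeries_succ K L L 1
  rw [h2eq, LieSubmodule.lie_le_iff]
  intro a _ c hc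
  exact h1M hc a

/-- Under the same hypotheses, in a nilpotent Lie algebra, the second term of the lower
central series vanishes. -/
lemma aux_lcs_bot {K L : Type*} [Field K] [LieRing L] [LieAlgebra K L]
    [LieModule.IsNilpotent L L]
    (X Y : L) (hspan : LieSubalgebra.lieSpan K L {X, Y} = ⊤)
    (h1 : ⁅X, ⁅X, Y⁆⁆ ∈ LieModule.lowerCentralSeries K L L 3)
    (h2 : ⁅Y, ⁅X, Y⁆⁆ ∈ LieModule.lowerCentralSeries K L L 3) :
    LieModule.lowerCentralSeries K L L 2 = ⊥ := by
  set N := LieModule.lowerCentralSeries K L L with hN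
  have h23 : N 2 ≤ N 3 := aux_lcs_le X Y hspan h1 h2
  obtain ⟨k, hk⟩ := (LieModule.isNilpotent_iff K L L).mp inferInstance
  have h2n : ∀ n : ℕ, N 2 ≤ N (n + 2) := by
    intro n
    induction n with
    | zero => exact le_refl _
    | succ n ih =>
      calc N 2 ≤ N 3 := h23
      _ = ⁅(⊤ : LieIdeal K L), N 2⁆ := LieModule.lowerCentralSeries_succ K L L 2
      _ ≤ ⁅(⊤ : LieIdeal K L), N (n + 2)⁆ := LieSubmodule.mono_lie_right _ ih
      _ = N (n + 3) := (LieModule.lowerCentralSeries_succ K L L (n + 2)).symm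
  have h' : N (k + 2) ≤ N k := LieModule.antitone_lowerCentralSeries K L L (by omega)
  rw [eq_bot_iff, ← hk]
  exact le_trans (h2n k) h'

/-- Let `𝔤` be a (finite-dimensional, characteristic zero) nilpotent Lie algebra and
`x, y ∈ 𝔤`, and let `L = ⟨x,y⟩` be the Lie subalgebra generated by `x` and `y`.  If
`⁅x,⁅x,y⁆⁆` and `⁅y,⁅x,y⁆⁆` both lie in `[L,[L,[L,L]]]` (the third term of the lower
central series of `L`), then every nested bracket in `x` and `y` of length at least 3
vanishes. -/
theorem stmt1 {K 𝔤 : Type*} [Field K] [CharZero K] [LieRing 𝔤] [LieAlgebra K 𝔤]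
    [FiniteDimensional K 𝔤] [LieModule.IsNilpotent 𝔤 𝔤] (x y : 𝔤)
    (X Y : ↥(LieSubalgebra.lieSpan K 𝔤 {x, y})) (hX : (X : 𝔤) = x) (hY : (Y : 𝔤) = y)
    (h1 : ⁅X, ⁅X, Y⁆⁆ ∈ LieModule.lowerCentralSeries K
      ↥(LieSubalgebra.lieSpan K 𝔤 {x, y}) ↥(LieSubalgebra.lieSpan K 𝔤 {x, y}) 3)
    (h2 : ⁅Y, ⁅X, Y⁆⁆ ∈ LieModule.lowerCentralSeries K
      ↥(LieSubalgebra.lieSpan K 𝔤 {x, y}) ↥(LieSubalgebra.lieSpan K 𝔤 {x, y}) 3) :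
    ∀ m : ℕ, 3 ≤ m → ∀ z : 𝔤, NestedBracket x y m z → z = 0 := by
  have htop : LieSubalgebra.lieSpan K ↥(LieSubalgebra.lieSpan K 𝔤 {x, y}) {X, Y} = ⊤ := by
    rw [eq_top_iff]
    rintro ⟨g, hg⟩ -
    have H : ∀ g : 𝔤, g ∈ LieSubalgebra.lieSpan K 𝔤 {x, y} →
        ∃ h : g ∈ LieSubalgebra.lieSpan K 𝔤 {x, y},
          (⟨g, h⟩ : ↥(LieSubalgebra.lieSpan K 𝔤 {x, y})) ∈
            LieSubalgebra.lieSpan K ↥(LieSubalgebra.lieSpan K 𝔤 {x, y}) {X, Y} := by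
      intro g hg
      refine LieSubalgebra.lieSpan_induction K
        (p := fun g _ => ∃ h : g ∈ LieSubalgebra.lieSpan K 𝔤 {x, y},
          (⟨g, h⟩ : ↥(LieSubalgebra.lieSpan K 𝔤 {x, y})) ∈
            LieSubalgebra.lieSpan K ↥(LieSubalgebra.lieSpan K 𝔤 {x, y}) {X, Y})
        ?_ ?_ ?_ ?_ ?_ hg
      · rintro g (hgx | hgy)
        · have hgL : g ∈ LieSubalgebra.lieSpan K 𝔤 {x, y} := by
            rw [hgx]; exact LieSubalgebra.subset_lieSpan (Set.mem_insert _ _)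
          refine ⟨hgL, ?_⟩
          have h : (⟨g, hgL⟩ : ↥(LieSubalgebra.lieSpan K 𝔤 {x, y})) = X :=
            Subtype.ext (by rw [hX]; exact hgx)
          rw [h]; exact LieSubalgebra.subset_lieSpan (Set.mem_insert _ _)
        · have hgy' : g = y := hgy
          have hgL : g ∈ LieSubalgebra.lieSpan K 𝔤 {x, y} := by
            rw [hgy']; exact LieSubalgebra.subset_lieSpan (Set.mem_insert_of_mem _ rfl)
          refine ⟨hgL, ?_⟩
          have h : (⟨g, hgL⟩ : ↥(LieSubalgebra.lieSpan K 𝔤 {x, y})) = Y :=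
            Subtype.ext (by rw [hY]; exact hgy')
          rw [h]; exact LieSubalgebra.subset_lieSpan (Set.mem_insert_of_mem _ rfl)
      · exact ⟨(LieSubalgebra.lieSpan K 𝔤 {x, y}).zero_mem,
          (LieSubalgebra.lieSpan K _ {X, Y}).zero_mem⟩
      · rintro a b _ _ ⟨ha, hamem⟩ ⟨hb, hbmem⟩
        exact ⟨(LieSubalgebra.lieSpan K 𝔤 {x, y}).add_mem ha hb,
          (LieSubalgebra.lieSpan K _ {X, Y}).add_mem hamem hbmem⟩
      · rintro r g _ ⟨h, hmem⟩
        exact ⟨(LieSubalgebra.lieSpan K 𝔤 {x, y}).smul_mem r h,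
          (LieSubalgebra.lieSpan K _ {X, Y}).smul_mem r hmem⟩
      · rintro a b _ _ ⟨ha, hamem⟩ ⟨hb, hbmem⟩
        exact ⟨(LieSubalgebra.lieSpan K 𝔤 {x, y}).lie_mem ha hb,
          (LieSubalgebra.lieSpan K _ {X, Y}).lie_mem hamem hbmem⟩
    obtain ⟨h, hmem⟩ := H g hg
    exact hmem
  have hLnilp : LieModule.IsNilpotent ↥(LieSubalgebra.lieSpan K 𝔤 {x, y}) ↥(LieSubalgebra.lieSpan K 𝔤 {x, y}) := by
    have hinj : Function.Injective (LieSubalgebra.lieSpan K 𝔤 {x, y}).incl :=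
      fun a b h => Subtype.ext h
    exact hinj.lieAlgebra_isNilpotent
  have hbot : LieModule.lowerCentralSeries K ↥(LieSubalgebra.lieSpan K 𝔤 {x, y})
      ↥(LieSubalgebra.lieSpan K 𝔤 {x, y}) 2 = ⊥ := aux_lcs_bot X Y htop h1 h2
  have main : ∀ m : ℕ, ∀ z : 𝔤, NestedBracket x y m z →
      1 ≤ m ∧ ∃ Z : ↥(LieSubalgebra.lieSpan K 𝔤 {x, y}),
        Z ∈ LieModule.lowerCentralSeries K ↥(LieSubalgebra.lieSpan K 𝔤 {x, y})
          ↥(LieSubalgebra.lieSpan K 𝔤 {x, y}) (min (m - 1) 2) ∧ (Z : 𝔤) = z := by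
    intro m z hz
    induction hz with
    | base_x => exact ⟨le_refl 1, X, by simp, hX⟩
    | base_y => exact ⟨le_refl 1, Y, by simp, hY⟩
    | @bracket m m' a b ha hb iha ihb =>
      obtain ⟨hm, A, hA, hAa⟩ := iha
      obtain ⟨hm', B, hB, hBb⟩ := ihb
      refine ⟨by omega, ⁅A, B⁆, ?_, by rw [← hAa, ← hBb]; rfl⟩
      rcases le_total m m' with hle | hle
      · have step : ⁅A, B⁆ ∈ LieModule.lowerCentralSeries K ↥(LieSubalgebra.lieSpan K 𝔤 {x, y}) ↥(LieSubalgebra.lieSpan K 𝔤 {x, y}) (min (m' - 1) 2 + 1) := by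
          have h : (⁅A, B⁆ : ↥(LieSubalgebra.lieSpan K 𝔤 {x, y})) ∈
              ⁅(⊤ : LieIdeal K ↥(LieSubalgebra.lieSpan K 𝔤 {x, y})),
                LieModule.lowerCentralSeries K ↥(LieSubalgebra.lieSpan K 𝔤 {x, y}) ↥(LieSubalgebra.lieSpan K 𝔤 {x, y}) (min (m' - 1) 2)⁆ :=
            LieSubmodule.lie_mem_lie (LieSubmodule.mem_top A) hB
          rwa [← LieModule.lowerCentralSeries_succ] at h
        exact LieModule.antitone_lowerCentralSeries K ↥(LieSubalgebra.lieSpan K 𝔤 {x, y}) ↥(LieSubalgebra.lieSpan K 𝔤 {x, y}) (by omega) step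
      · have skew : (⁅A, B⁆ : ↥(LieSubalgebra.lieSpan K 𝔤 {x, y})) = -⁅B, A⁆ := by
          rw [← lie_skew]
        have step : ⁅B, A⁆ ∈ LieModule.lowerCentralSeries K ↥(LieSubalgebra.lieSpan K 𝔤 {x, y}) ↥(LieSubalgebra.lieSpan K 𝔤 {x, y}) (min (m - 1) 2 + 1) := by
          have h : (⁅B, A⁆ : ↥(LieSubalgebra.lieSpan K 𝔤 {x, y})) ∈
              ⁅(⊤ : LieIdeal K ↥(LieSubalgebra.lieSpan K 𝔤 {x, y})),
                LieModule.lowerCentralSeries K ↥(LieSubalgebra.lieSpan K 𝔤 {x, y}) ↥(LieSubalgebra.lieSpan K 𝔤 {x, y}) (min (m - 1) 2)⁆ :=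
            LieSubmodule.lie_mem_lie (LieSubmodule.mem_top B) hA
          rwa [← LieModule.lowerCentralSeries_succ] at h
        rw [skew]
        exact neg_mem <|
          LieModule.antitone_lowerCentralSeries K ↥(LieSubalgebra.lieSpan K 𝔤 {x, y}) ↥(LieSubalgebra.lieSpan K 𝔤 {x, y}) (by omega) step
  intro m hm z hz
  obtain ⟨-, Z, hZ, hZz⟩ := main m z hz
  have hmin : min (m - 1) 2 = 2 := by omega
  rw [hmin, hbot] at hZ
  rw [← hZz, (LieSubmodule.mem_bot Z).mp hZ]
  rfl
end

section
/- Let ω: V×V → Z be skew-symmetric bilinear, β: U×U → Z skew-symmetric, W ⊂ U a complement of ker(β^ad) with β = i*β ⊕ 0 relative to a direct sum decomposition U = W ⊕ W'. Then the inclusion {f ∈ Hom(W,V) | f*ω = i*β} ↪ {f ∈ Hom(U,V) | f*ω = β}, given by extending linearly by zero on W', admits a deformation retraction; the retraction and homotopy are induced by the linear homotopy H_t(w,w') = (w, t·w'). -/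
/-- Let `ω : V × V → Z` be skew-symmetric bilinear, `β : U × U → Z` skew-symmetric,
`W ⊆ U` a complement of `W' = ker(β^ad)` (so that `β = i*β ⊕ 0` for the decomposition
`U = W ⊕ W'`).  Then the inclusion `{g ∈ Hom(W,V) | g*ω = i*β} ↪ {f ∈ Hom(U,V) | f*ω = β}`,
given by extending linearly by zero on `W'` (equivalently, its image is the set of `f` in the
fiber vanishing on `W'`), admits a (strong) deformation retraction, induced by the linear
homotopy `H_t(w,w') = (w, t·w')`. -/
theorem stmt5 {𝔽 U V Z : Type*} [RCLike 𝔽]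
    [NormedAddCommGroup U] [NormedSpace 𝔽 U] [FiniteDimensional 𝔽 U]
    [NormedAddCommGroup V] [NormedSpace 𝔽 V] [FiniteDimensional 𝔽 V]
    [AddCommGroup Z] [Module 𝔽 Z]
    (ω : V →ₗ[𝔽] V →ₗ[𝔽] Z) (hω : ∀ v v', ω v v' = - ω v' v)
    (β : U →ₗ[𝔽] U →ₗ[𝔽] Z) (hβ : ∀ u u', β u u' = - β u' u)
    (W W' : Submodule 𝔽 U) (hc : IsCompl W W') (hW' : W' = LinearMap.ker β) :
    ∃ H : C(ℝ × {f : U →L[𝔽] V //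
          LinearMap.compl₁₂ ω (f : U →ₗ[𝔽] V) (f : U →ₗ[𝔽] V) = β},
        {f : U →L[𝔽] V // LinearMap.compl₁₂ ω (f : U →ₗ[𝔽] V) (f : U →ₗ[𝔽] V) = β}),
      -- the homotopy is induced by `H_t(w,w') = (w, t·w')`
      (∀ (t : ℝ) f, ((H (t, f)).1 : U →ₗ[𝔽] V)
          = ((f.1 : U →ₗ[𝔽] V)).comp
              ((W.subtype.comp (Submodule.linearProjOfIsCompl W W' hc))
                + ((t : 𝔽) • (W'.subtype.comp (Submodule.linearProjOfIsCompl W' W hc.symm)))))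
      -- it ends at the identity
      ∧ (∀ f, H (1, f) = f)
      -- it starts in the image of the inclusion, i.e. among maps vanishing on `W'`
      ∧ (∀ f, ∀ u ∈ W', ((H (0, f)).1 : U → V) u = 0)
      -- it fixes the image of the inclusion at all times
      ∧ (∀ (t : ℝ) f, (∀ u ∈ W', (f.1 : U → V) u = 0) → H (t, f) = f)
      -- and the image of the inclusion (maps vanishing on `W'`) consists exactly of the
      -- extensions by zero of the maps `g : W → V` with `g*ω = i*β`
      ∧ (∀ f : {f : U →L[𝔽] V //
            LinearMap.compl₁₂ ω (f : U →ₗ[𝔽] V) (f : U →ₗ[𝔽] V) = β},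
          (∀ u ∈ W', (f.1 : U → V) u = 0) ↔
            ∃ g : {g : ↥W →L[𝔽] V // LinearMap.compl₁₂ ω (g : ↥W →ₗ[𝔽] V) (g : ↥W →ₗ[𝔽] V)
                = LinearMap.compl₁₂ β W.subtype W.subtype},
              (f.1 : U →ₗ[𝔽] V)
                = ((g.1 : ↥W →ₗ[𝔽] V)).comp (Submodule.linearProjOfIsCompl W W' hc)) := by
  -- projections
  set p : U →ₗ[𝔽] U := W.subtype.comp (Submodule.linearProjOfIsCompl W W' hc) with hp
  set q : U →ₗ[𝔽] U := W'.subtype.comp (Submodule.linearProjOfIsCompl W' W hc.symm) with hq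
  have hpq : ∀ u, p u + q u = u := fun u =>
    Submodule.projection_add_projection_eq_self hc u
  have hpW' : ∀ u ∈ W', p u = 0 := fun u hu => by
    simp [hp, Submodule.linearProjOfIsCompl, Submodule.projectionOnto_apply_of_mem_right hc hu]
  have hqW' : ∀ u ∈ W', q u = u := fun u hu => by
    simp [hq, Submodule.linearProjOfIsCompl, Submodule.projectionOnto_apply_left hc.symm ⟨u, hu⟩]
  have hpmem : ∀ u, p u ∈ W := fun u => (Submodule.linearProjOfIsCompl W W' hc u).2
  have hqmem : ∀ u, q u ∈ W' := fun u => (Submodule.linearProjOfIsCompl W' W hc.symm u).2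
  have hβ0 : ∀ u ∈ W', ∀ v, β u v = 0 := by
    intro u hu v
    rw [hW', LinearMap.mem_ker] at hu
    rw [hu]; rfl
  have hβ0' : ∀ v, ∀ u ∈ W', β v u = 0 := fun v u hu => by
    rw [hβ v u, hβ0 u hu v, neg_zero]
  have hβp : ∀ u u', β (p u) (p u') = β u u' := by
    intro u u'
    conv_rhs => rw [← hpq u, ← hpq u']
    simp [map_add, hβ0 _ (hqmem u), hβ0' _ _ (hqmem u')]
  -- the fiber condition is preserved
  have key : ∀ (t : 𝔽) (f : U →L[𝔽] V),
      LinearMap.compl₁₂ ω (f : U →ₗ[𝔽] V) (f : U →ₗ[𝔽] V) = β →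
      LinearMap.compl₁₂ ω ((f : U →ₗ[𝔽] V).comp (p + t • q))
        ((f : U →ₗ[𝔽] V).comp (p + t • q)) = β := by
    intro t f hf
    ext u u'
    have h1 : ∀ a b, ω ((f : U →ₗ[𝔽] V) a) ((f : U →ₗ[𝔽] V) b) = β a b := fun a b => by
      simpa [LinearMap.compl₁₂_apply] using LinearMap.congr_fun (LinearMap.congr_fun hf a) b
    simp only [LinearMap.compl₁₂_apply, LinearMap.comp_apply, LinearMap.add_apply,
      LinearMap.smul_apply]
    rw [h1]
    simp [map_add, map_smul, hβ0 _ (hqmem u), hβ0' _ _ (hqmem u'),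
      hβ0 _ (W'.smul_mem t (hqmem u)), hβ0' _ _ (W'.smul_mem t (hqmem u')), hβp]
  -- continuous versions
  set pc : U →L[𝔽] U := p.toContinuousLinearMap with hpc
  set qc : U →L[𝔽] U := q.toContinuousLinearMap with hqc
  have hBcoe : ∀ t : 𝔽, ((pc + t • qc : U →L[𝔽] U) : U →ₗ[𝔽] U) = p + t • q := by
    intro t; ext u; simp [hpc, hqc]
  refine ⟨⟨fun x => ⟨x.2.1.comp (pc + (x.1 : 𝔽) • qc), by
      rw [ContinuousLinearMap.toLinearMap_comp, hBcoe]
      exact key _ _ x.2.2⟩, ?_⟩, ?_, ?_, ?_, ?_, ?_⟩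
  · apply Continuous.subtype_mk
    exact (continuous_subtype_val.comp continuous_snd).clm_comp
      (continuous_const.add (((RCLike.continuous_ofReal.comp continuous_fst :
          Continuous fun x : ℝ × _ => ((x.1 : ℝ) : 𝔽))).smul
        continuous_const))
  · intro t f
    show ((f.1.comp (pc + (t:𝔽) • qc) : U →L[𝔽] V) : U →ₗ[𝔽] V) = _
    rw [ContinuousLinearMap.toLinearMap_comp, hBcoe]
  · intro f
    apply Subtype.ext
    ext u
    have : p u + (1 : 𝔽) • q u = u := by rw [one_smul]; exact hpq u
    simp only [ContinuousMap.coe_mk, ContinuousLinearMap.comp_apply,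
      ContinuousLinearMap.add_apply, ContinuousLinearMap.smul_apply]
    simp only [hpc, hqc, LinearMap.coe_toContinuousLinearMap']
    rw [RCLike.ofReal_one, this]
  · intro f u hu
    simp only [ContinuousMap.coe_mk, ContinuousLinearMap.comp_apply,
      ContinuousLinearMap.coe_coe, ContinuousLinearMap.add_apply,
      ContinuousLinearMap.smul_apply]
    simp only [hpc, hqc, LinearMap.coe_toContinuousLinearMap']
    rw [RCLike.ofReal_zero, hpW' u hu, zero_smul, add_zero, map_zero]
  · intro t f hf
    apply Subtype.ext
    ext u
    simp only [ContinuousMap.coe_mk, ContinuousLinearMap.comp_apply,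
      ContinuousLinearMap.add_apply, ContinuousLinearMap.smul_apply]
    simp only [hpc, hqc, LinearMap.coe_toContinuousLinearMap']
    have h1 : f.1 (q u) = 0 := hf _ (hqmem u)
    have h2 : f.1 ((t : 𝔽) • q u) = 0 := by rw [map_smul, h1, smul_zero]
    conv_rhs => rw [← hpq u]
    rw [map_add, map_add, h2, h1]
  · intro f
    constructor
    · intro hf
      refine ⟨⟨f.1.comp W.subtypeL, ?_⟩, ?_⟩
      · ext w w'
        have h1 : ∀ a b, ω ((f.1 : U →ₗ[𝔽] V) a) ((f.1 : U →ₗ[𝔽] V) b) = β a b := fun a b => by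
          simpa [LinearMap.compl₁₂_apply] using LinearMap.congr_fun (LinearMap.congr_fun f.2 a) b
        simp only [LinearMap.compl₁₂_apply, LinearMap.comp_apply, ContinuousLinearMap.coe_coe,
          ContinuousLinearMap.comp_apply, Submodule.coe_subtypeL', Submodule.coe_subtype]
        exact h1 w w'
      · ext u
        simp only [LinearMap.comp_apply, ContinuousLinearMap.coe_coe,
          ContinuousLinearMap.comp_apply, Submodule.coe_subtypeL', Submodule.coe_subtype]
        conv_lhs => rw [← hpq u]
        rw [map_add, hf _ (hqmem u), add_zero]
        rfl
    · rintro ⟨g, hg⟩ u hu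
      have : (f.1 : U → V) u = (f.1 : U →ₗ[𝔽] V) u := rfl
      rw [this, hg]
      simp [Submodule.linearProjOfIsCompl, Submodule.projectionOnto_apply_of_mem_right hc hu]
end

section
/- The space X(2,n,2) = {M ∈ Mat_{2n×2}(ℝ) | Mᵀ Ω_n M = Ω_1} of real 2n×2 matrices satisfying the rank-2 symplectic condition is homeomorphic to S^{2n−1} × ℝ^{2n}; an explicit homeomorphism sends the column pairs (after the change of variables x₁ = u₁−v₁, y₂ = u₁+v₁, x₂ = v₂−u₂, y₁ = v₂+u₂) to the normalized vector (u₁,u₂)/‖(u₁,u₂)‖ together with (v₁,v₂). -/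
open Matrix

/-- For a real `2n × 2` matrix `M` (rows indexed by `Fin n ⊕ Fin n`, columns by
`Fin 1 ⊕ Fin 1`), with columns written via `x₁ = u₁−v₁`, `y₂ = u₁+v₁`, `x₂ = v₂−u₂`,
`y₁ = v₂+u₂`, the vector `(u₁,u₂) ∈ ℝ^{2n}`, i.e. `u₁ = (x₁+y₂)/2`, `u₂ = (y₁−x₂)/2`. -/
noncomputable def Uvec (n : ℕ) (M : Matrix (Fin n ⊕ Fin n) (Fin 1 ⊕ Fin 1) ℝ) :
    EuclideanSpace ℝ (Fin n ⊕ Fin n) :=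
  WithLp.toLp 2 (Sum.elim (fun i => (M (Sum.inl i) (Sum.inl 0) + M (Sum.inr i) (Sum.inr 0)) / 2)
    (fun i => (M (Sum.inr i) (Sum.inl 0) - M (Sum.inl i) (Sum.inr 0)) / 2))

/-- The vector `(v₁,v₂) ∈ ℝ^{2n}`, i.e. `v₁ = (y₂−x₁)/2`, `v₂ = (y₁+x₂)/2`. -/
noncomputable def Vvec (n : ℕ) (M : Matrix (Fin n ⊕ Fin n) (Fin 1 ⊕ Fin 1) ℝ) :
    EuclideanSpace ℝ (Fin n ⊕ Fin n) :=
  WithLp.toLp 2 (Sum.elim (fun i => (M (Sum.inr i) (Sum.inr 0) - M (Sum.inl i) (Sum.inl 0)) / 2)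
    (fun i => (M (Sum.inr i) (Sum.inl 0) + M (Sum.inl i) (Sum.inr 0)) / 2))

noncomputable def UVequiv (n : ℕ) : Matrix (Fin n ⊕ Fin n) (Fin 1 ⊕ Fin 1) ℝ ≃ₗ[ℝ]
    (EuclideanSpace ℝ (Fin n ⊕ Fin n)) × (EuclideanSpace ℝ (Fin n ⊕ Fin n)) where
  toFun M := (Uvec n M, Vvec n M)
  invFun p := Matrix.of fun i j =>
    match i, j with
    | Sum.inl i, Sum.inl _ => p.1 (Sum.inl i) - p.2 (Sum.inl i)
    | Sum.inr i, Sum.inl _ => p.1 (Sum.inr i) + p.2 (Sum.inr i)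
    | Sum.inl i, Sum.inr _ => p.2 (Sum.inr i) - p.1 (Sum.inr i)
    | Sum.inr i, Sum.inr _ => p.1 (Sum.inl i) + p.2 (Sum.inl i)
  map_add' M N := by
    refine Prod.ext ?_ ?_ <;> ext i <;> cases i <;>
      simp [Uvec, Vvec, Matrix.add_apply, PiLp.add_apply] <;> ring
  map_smul' c M := by
    refine Prod.ext ?_ ?_ <;> ext i <;> cases i <;>
      simp [Uvec, Vvec, Matrix.smul_apply, PiLp.smul_apply, smul_eq_mul] <;> ring
  left_inv M := by
    funext i j
    cases i <;> rcases j with j | j <;> fin_cases j <;>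
      simp [Uvec, Vvec] <;> ring
  right_inv p := by
    refine Prod.ext ?_ ?_ <;> ext i <;> cases i <;> simp [Uvec, Vvec] <;> ring

lemma normsq_eq (n : ℕ) (u : EuclideanSpace ℝ (Fin n ⊕ Fin n)) :
    ‖u‖ ^ 2 = ∑ i, u i * u i := by
  rw [← real_inner_self_eq_norm_sq]
  simp only [PiLp.inner_apply, RCLike.inner_apply, conj_trivial]

lemma cond_iff (n : ℕ) (M : Matrix (Fin n ⊕ Fin n) (Fin 1 ⊕ Fin 1) ℝ) :
    Mᵀ * Matrix.J (Fin n) ℝ * M = Matrix.J (Fin 1) ℝ ↔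
      ‖Uvec n M‖ ^ 2 = 1 + ‖Vvec n M‖ ^ 2 := by
  set S : ℝ := ∑ i : Fin n, (M (Sum.inl i) (Sum.inl 0) * M (Sum.inr i) (Sum.inr 0)
      - M (Sum.inr i) (Sum.inl 0) * M (Sum.inl i) (Sum.inr 0)) with hS
  have entry_lr : (Mᵀ * Matrix.J (Fin n) ℝ * M) (Sum.inl 0) (Sum.inr 0) = -S := by
    rw [hS, ← Finset.sum_neg_distrib]
    simp [Matrix.mul_apply, Matrix.J, Matrix.fromBlocks, Fintype.sum_sum_type,
      Finset.mul_sum, Finset.sum_mul, Matrix.one_apply, ite_mul, mul_ite,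
      Finset.sum_ite_eq, Finset.sum_ite_eq', Finset.sum_sub_distrib]
    ring
  have entry_rl : (Mᵀ * Matrix.J (Fin n) ℝ * M) (Sum.inr 0) (Sum.inl 0) = S := by
    rw [hS]
    simp [Matrix.mul_apply, Matrix.J, Matrix.fromBlocks, Fintype.sum_sum_type,
      Finset.mul_sum, Finset.sum_mul, Matrix.one_apply, ite_mul, mul_ite,
      Finset.sum_ite_eq, Finset.sum_ite_eq', Finset.sum_sub_distrib, mul_comm]
    ring
  have entry_ll : (Mᵀ * Matrix.J (Fin n) ℝ * M) (Sum.inl 0) (Sum.inl 0) = 0 := by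
    simp [Matrix.mul_apply, Matrix.J, Matrix.fromBlocks, Fintype.sum_sum_type,
      Finset.mul_sum, Finset.sum_mul, Matrix.one_apply, ite_mul, mul_ite,
      Finset.sum_ite_eq, Finset.sum_ite_eq', mul_comm]
  have entry_rr : (Mᵀ * Matrix.J (Fin n) ℝ * M) (Sum.inr 0) (Sum.inr 0) = 0 := by
    simp [Matrix.mul_apply, Matrix.J, Matrix.fromBlocks, Fintype.sum_sum_type,
      Finset.mul_sum, Finset.sum_mul, Matrix.one_apply, ite_mul, mul_ite,
      Finset.sum_ite_eq, Finset.sum_ite_eq', mul_comm]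
  have key : ‖Uvec n M‖ ^ 2 - ‖Vvec n M‖ ^ 2 = S := by
    rw [normsq_eq, normsq_eq, ← Finset.sum_sub_distrib, hS]
    rw [Fintype.sum_sum_type]
    rw [← Finset.sum_add_distrib]
    refine Finset.sum_congr rfl fun i _ => ?_
    simp [Uvec, Vvec]
    ring
  constructor
  · intro h
    have h1 := entry_lr
    rw [h] at h1
    simp [Matrix.J] at h1
    nlinarith [key, h1]
  · intro h
    have hS1 : S = 1 := by nlinarith [key]
    funext i j
    rcases i with i | i <;> rcases j with j | j <;>
      obtain rfl : i = 0 := Subsingleton.elim i 0 <;>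
      obtain rfl : j = 0 := Subsingleton.elim j 0
    · rw [entry_ll]; simp [Matrix.J]
    · rw [entry_lr, hS1]; simp [Matrix.J]
    · rw [entry_rl, hS1]; simp [Matrix.J]
    · rw [entry_rr]; simp [Matrix.J]

noncomputable def hyperHomeo (n : ℕ) :
    {p : (EuclideanSpace ℝ (Fin n ⊕ Fin n)) × (EuclideanSpace ℝ (Fin n ⊕ Fin n)) //
        ‖p.1‖ ^ 2 = 1 + ‖p.2‖ ^ 2} ≃ₜ
      Metric.sphere (0 : EuclideanSpace ℝ (Fin n ⊕ Fin n)) 1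
        × EuclideanSpace ℝ (Fin n ⊕ Fin n) where
  toFun p := (⟨‖p.1.1‖⁻¹ • p.1.1, by
      have h0 : p.1.1 ≠ 0 := by
        intro h
        have := p.2
        rw [h] at this
        simp at this
        nlinarith [sq_nonneg ‖p.1.2‖]
      simp [mem_sphere_zero_iff_norm, norm_smul, abs_of_nonneg,
        inv_mul_cancel₀ (norm_ne_zero_iff.mpr h0)]⟩, p.1.2)
  invFun q := ⟨(Real.sqrt (1 + ‖q.2‖ ^ 2) • (q.1 : EuclideanSpace ℝ (Fin n ⊕ Fin n)), q.2), by
      have hs : ‖(q.1 : EuclideanSpace ℝ (Fin n ⊕ Fin n))‖ = 1 :=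
        mem_sphere_zero_iff_norm.mp q.1.2
      have hpos : (0 : ℝ) < 1 + ‖q.2‖ ^ 2 := by positivity
      simp only [norm_smul, hs, mul_one, Real.norm_eq_abs,
        abs_of_nonneg (Real.sqrt_nonneg _)]
      rw [Real.sq_sqrt hpos.le]⟩
  left_inv p := by
    have hpos : (0 : ℝ) < 1 + ‖p.1.2‖ ^ 2 := by positivity
    have hn : ‖p.1.1‖ = Real.sqrt (1 + ‖p.1.2‖ ^ 2) := by
      rw [← p.2, Real.sqrt_sq (norm_nonneg _)]
    have hne : ‖p.1.1‖ ≠ 0 := by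
      rw [hn]; positivity
    apply Subtype.ext
    refine Prod.ext ?_ rfl
    simp only [← hn, smul_smul, mul_inv_cancel₀ hne, one_smul]
  right_inv q := by
    have hs : ‖(q.1 : EuclideanSpace ℝ (Fin n ⊕ Fin n))‖ = 1 :=
      mem_sphere_zero_iff_norm.mp q.1.2
    have hpos : (0 : ℝ) < Real.sqrt (1 + ‖q.2‖ ^ 2) := by positivity
    refine Prod.ext (Subtype.ext ?_) rfl
    simp only [norm_smul, hs, mul_one, Real.norm_eq_abs, abs_of_nonneg hpos.le,
      smul_smul, inv_mul_cancel₀ hpos.ne', one_smul]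
  continuous_toFun := by
    have hc1 : Continuous fun p : {p : (EuclideanSpace ℝ (Fin n ⊕ Fin n)) ×
        (EuclideanSpace ℝ (Fin n ⊕ Fin n)) // ‖p.1‖ ^ 2 = 1 + ‖p.2‖ ^ 2} =>
        p.1.1 := continuous_subtype_val.fst
    have hne : ∀ p : {p : (EuclideanSpace ℝ (Fin n ⊕ Fin n)) ×
        (EuclideanSpace ℝ (Fin n ⊕ Fin n)) // ‖p.1‖ ^ 2 = 1 + ‖p.2‖ ^ 2},
        ‖p.1.1‖ ≠ 0 := by
      intro p
      have := p.2
      intro h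
      rw [h] at this
      nlinarith [sq_nonneg ‖p.1.2‖]
    refine Continuous.prodMk (Continuous.subtype_mk ?_ _)
      (continuous_subtype_val.snd)
    exact ((hc1.norm.inv₀ hne)).smul hc1
  continuous_invFun := by
    refine Continuous.subtype_mk (Continuous.prodMk ?_ continuous_snd) _
    exact ((Real.continuous_sqrt.comp (continuous_const.add
      (continuous_snd.norm.pow 2)))).smul (continuous_subtype_val.comp continuous_fst)

/-- The space `X(2,n,2)` of real `2n × 2` matrices `M` with `Mᵀ Ω_n M = Ω_1` is homeomorphic
to `S^{2n−1} × ℝ^{2n}`, via the homeomorphism sending `M` (after the change of variables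
`x₁ = u₁−v₁`, `y₂ = u₁+v₁`, `x₂ = v₂−u₂`, `y₁ = v₂+u₂`) to the normalized vector
`(u₁,u₂)/‖(u₁,u₂)‖` together with `(v₁,v₂)`. -/
theorem stmt10 (n : ℕ) (hn : 1 ≤ n) :
    ∃ e : {M : Matrix (Fin n ⊕ Fin n) (Fin 1 ⊕ Fin 1) ℝ //
            Mᵀ * Matrix.J (Fin n) ℝ * M = Matrix.J (Fin 1) ℝ}
          ≃ₜ Metric.sphere (0 : EuclideanSpace ℝ (Fin n ⊕ Fin n)) 1
              × EuclideanSpace ℝ (Fin n ⊕ Fin n),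
      ∀ M, ((e M).1 : EuclideanSpace ℝ (Fin n ⊕ Fin n)) = ‖Uvec n M.1‖⁻¹ • Uvec n M.1
        ∧ (e M).2 = Vvec n M.1 := by
  refine ⟨(Homeomorph.subtype (UVequiv n).toContinuousLinearEquiv.toHomeomorph
      (fun M => cond_iff n M)).trans (hyperHomeo n), fun M => ⟨rfl, rfl⟩⟩
end

section
/- The space X(2,n,0) = {M ∈ Mat_{2n×2}(ℝ) | Mᵀ Ω_n M = 0} of real 2n×2 matrices whose columns span an isotropic subspace is homeomorphic to the open cone C(S^{2n−1} × S^{2n−1}); in particular X(2,n,0) minus the zero matrix is homeomorphic to S^{2n−1} × S^{2n−1} × (0,∞). -/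
open Matrix

/-- The open cone on a space `X`: the quotient `([0,1) × X) / ({0} × X)`. -/
def OpenCone (X : Type*) [TopologicalSpace X] : Type _ :=
  Quot (fun a b : (Set.Ico (0 : ℝ) 1) × X => (a.1.1 = 0 ∧ b.1.1 = 0) ∨ a = b)

instance (X : Type*) [TopologicalSpace X] : TopologicalSpace (OpenCone X) :=
  instTopologicalSpaceQuot

open Metric Set
open scoped Classical

namespace Stmt11
variable {n : ℕ}
abbrev E (n : ℕ) := EuclideanSpace ℝ (Fin n ⊕ Fin n)
abbrev Mat (n : ℕ) := Matrix (Fin n ⊕ Fin n) (Fin 1 ⊕ Fin 1) ℝ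
abbrev Sph (n : ℕ) := Metric.sphere (0 : E n) 1
abbrev Y (n : ℕ) := {p : E n × E n // ‖p.1‖ = ‖p.2‖}



noncomputable def toUV (M : Mat n) : E n × E n :=
  ((WithLp.equiv 2 _).symm (Sum.elim (fun i => (M (.inl i) (.inl 0) + M (.inr i) (.inr 0)) / 2)
      (fun i => (M (.inl i) (.inr 0) - M (.inr i) (.inl 0)) / 2)),
   (WithLp.equiv 2 _).symm (Sum.elim (fun i => (M (.inr i) (.inr 0) - M (.inl i) (.inl 0)) / 2)
      (fun i => (M (.inl i) (.inr 0) + M (.inr i) (.inl 0)) / 2)))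

noncomputable def ofUV (p : E n × E n) : Mat n :=
  Matrix.of fun k c =>
    match k, c with
    | .inl i, .inl _ => p.1 (.inl i) - p.2 (.inl i)
    | .inr i, .inl _ => p.2 (.inr i) - p.1 (.inr i)
    | .inl i, .inr _ => p.2 (.inr i) + p.1 (.inr i)
    | .inr i, .inr _ => p.1 (.inl i) + p.2 (.inl i)

set_option maxHeartbeats 1000000 in
noncomputable def matHomeo : Mat n ≃ₜ E n × E n where
  toFun := toUV
  invFun := ofUV
  left_inv M := by
    funext k c
    cases k <;> cases c <;>
      simp [toUV, ofUV, Fin.eq_zero] <;> ring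
  right_inv p := by
    ext x
    · rcases x with i | i <;> simp [toUV, ofUV] <;> ring
    · rcases x with i | i <;> simp [toUV, ofUV] <;> ring
  continuous_toFun := by
    apply Continuous.prodMk <;>
    · apply (PiLp.continuous_toLp 2 _).comp
      apply continuous_pi
      rintro (i | i) <;> simp only [Sum.elim_inl, Sum.elim_inr] <;> fun_prop
  continuous_invFun := by
    apply continuous_pi
    intro k
    apply continuous_pi
    intro c
    have h1 : ∀ x : Fin n ⊕ Fin n, Continuous fun p : E n × E n => p.1 x := fun x =>
      (continuous_apply x).comp ((PiLp.continuous_ofLp 2 _).comp continuous_fst)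
    have h2 : ∀ x : Fin n ⊕ Fin n, Continuous fun p : E n × E n => p.2 x := fun x =>
      (continuous_apply x).comp ((PiLp.continuous_ofLp 2 _).comp continuous_snd)
    cases k <;> cases c <;> simp only [ofUV, Matrix.of_apply] <;>
      first
      | exact ((h1 _).sub (h2 _)) | exact ((h2 _).sub (h1 _))
      | exact ((h2 _).add (h1 _)) | exact ((h1 _).add (h2 _))



lemma entry_eq (M : Mat n) (a b : Fin 1 ⊕ Fin 1) :
    (Mᵀ * Matrix.J (Fin n) ℝ * M) a b
      = ∑ i : Fin n, (M (.inr i) a * M (.inl i) b - M (.inl i) a * M (.inr i) b) := by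
  simp [Matrix.mul_apply, Matrix.J, Fintype.sum_sum_type, Matrix.fromBlocks,
    Finset.mul_sum, Finset.sum_sub_distrib, ite_mul, mul_ite, Matrix.one_apply,
    Finset.sum_ite_eq, Finset.sum_ite_eq']
  rw [sub_eq_add_neg]

lemma norm_eq_iff (x y : E n) : ‖x‖ = ‖y‖ ↔ ∑ k, x k ^ 2 = ∑ k, y k ^ 2 := by
  rw [EuclideanSpace.norm_eq, EuclideanSpace.norm_eq,
    Real.sqrt_inj (by positivity) (by positivity)]
  simp [Real.norm_eq_abs, sq_abs]

lemma isotropic_iff (M : Mat n) :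
    Mᵀ * Matrix.J (Fin n) ℝ * M = 0 ↔ ‖(toUV M).1‖ = ‖(toUV M).2‖ := by
  rw [norm_eq_iff]
  conv_rhs => rw [← sub_eq_zero]
  have quad : ∑ k, (toUV M).1 k ^ 2 - ∑ k, (toUV M).2 k ^ 2
      = ∑ i : Fin n, (M (.inl i) (.inl 0) * M (.inr i) (.inr 0)
          - M (.inr i) (.inl 0) * M (.inl i) (.inr 0)) := by
    simp only [toUV, Fintype.sum_sum_type, WithLp.equiv_symm_apply, PiLp.toLp_apply, WithLp.ofLp_toLp, Sum.elim_inl,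
      Sum.elim_inr]
    rw [← Finset.sum_add_distrib, ← Finset.sum_add_distrib, ← Finset.sum_sub_distrib]
    exact Finset.sum_congr rfl fun i _ => by ring
  rw [quad]
  constructor
  · intro h
    have h1 := entry_eq M (.inr 0) (.inl 0)
    rw [h] at h1
    simp only [Matrix.zero_apply] at h1
    rw [h1]
    exact Finset.sum_congr rfl fun i _ => by ring
  · intro h
    ext a b
    rw [entry_eq, Matrix.zero_apply]
    have ha : ∀ c : Fin 1 ⊕ Fin 1, c = .inl 0 ∨ c = .inr 0 := by
      rintro (c | c) <;> [left; right] <;> simp [Fin.eq_zero]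
    rcases ha a with rfl | rfl <;> rcases ha b with rfl | rfl
    · exact Finset.sum_eq_zero fun i _ => by ring
    · rw [← neg_eq_zero, ← Finset.sum_neg_distrib]
      rw [← h]
      exact Finset.sum_congr rfl fun i _ => by ring
    · rw [← h]
      exact Finset.sum_congr rfl fun i _ => by ring
    · exact Finset.sum_eq_zero fun i _ => by ring

/-- reparametrization [0,∞) → [0,1) -/
noncomputable def rr (t : ℝ) : ℝ := t / (1 + t)
/-- reparametrization [0,1) → [0,∞) -/
noncomputable def cc (s : ℝ) : ℝ := s / (1 - s)

lemma rr_mem {t : ℝ} (ht : 0 ≤ t) : rr t ∈ Set.Ico (0:ℝ) 1 := by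
  constructor
  · exact div_nonneg ht (by linarith)
  · rw [rr, div_lt_one (by linarith)]; linarith

lemma cc_nonneg {s : ℝ} (hs : s ∈ Set.Ico (0:ℝ) 1) : 0 ≤ cc s :=
  div_nonneg hs.1 (by linarith [hs.2])

lemma cc_pos {s : ℝ} (hs : s ∈ Set.Ico (0:ℝ) 1) (h : s ≠ 0) : 0 < cc s :=
  div_pos (lt_of_le_of_ne hs.1 (Ne.symm h)) (by linarith [hs.2])

lemma rr_cc {s : ℝ} (hs : s ∈ Set.Ico (0:ℝ) 1) : rr (cc s) = s := by
  have h1 : (1:ℝ) - s ≠ 0 := by linarith [hs.2]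
  rw [rr, cc]; field_simp; ring

lemma cc_rr {t : ℝ} (ht : 0 ≤ t) : cc (rr t) = t := by
  have h1 : (1:ℝ) + t ≠ 0 := by linarith
  rw [cc, rr]
  rw [show 1 - t / (1 + t) = 1 / (1 + t) by field_simp; ring]
  field_simp


lemma mem_sphere' {x : E n} (h : ‖x‖ = 1) : x ∈ Sph n := by
  simpa [mem_sphere_iff_norm] using h

lemma norm_of_sphere {x : Sph n} : ‖(x : E n)‖ = 1 := by
  have := x.2; simpa [mem_sphere_iff_norm] using this

/-- the map defining the cone-to-Y map -/
noncomputable def coneFun (q : (Set.Ico (0:ℝ) 1) × (Sph n × Sph n)) : Y n :=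
  ⟨(cc q.1.1 • (q.2.1 : E n), cc q.1.1 • (q.2.2 : E n)), by
    simp [norm_smul, norm_of_sphere]⟩

lemma coneFun_resp (a b : (Set.Ico (0:ℝ) 1) × (Sph n × Sph n))
    (hab : (a.1.1 = 0 ∧ b.1.1 = 0) ∨ a = b) : coneFun a = coneFun b := by
  rcases hab with ⟨h1, h2⟩ | rfl
  · apply Subtype.ext
    simp [coneFun, h1, h2, cc]
  · rfl

noncomputable def coneToY : OpenCone (Sph n × Sph n) → Y n :=
  Quot.lift coneFun coneFun_resp

lemma continuous_coneToY : Continuous (coneToY (n := n)) := by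
  apply continuous_quot_lift
  apply Continuous.subtype_mk
  have hc : Continuous fun q : (Set.Ico (0:ℝ) 1) × (Sph n × Sph n) => cc q.1.1 := by
    apply Continuous.div
    · exact continuous_subtype_val.comp continuous_fst
    · exact continuous_const.sub (continuous_subtype_val.comp continuous_fst)
    · intro q; have := q.1.2.2; intro h; linarith
  exact (hc.smul (continuous_subtype_val.comp (continuous_fst.comp continuous_snd))).prodMk
    (hc.smul (continuous_subtype_val.comp (continuous_snd.comp continuous_snd)))

variable (hn : 1 ≤ n)

/-- basepoint on the sphere -/
noncomputable def pt (n : ℕ) (hn : 1 ≤ n) : Sph n :=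
  ⟨EuclideanSpace.single (Sum.inl (⟨0, hn⟩ : Fin n)) (1:ℝ), by
    simp [mem_sphere_iff_norm, EuclideanSpace.norm_single]⟩

/-- the [0,1) parameter of a point of Y -/
noncomputable def tau (y : Y n) : Set.Ico (0:ℝ) 1 :=
  ⟨rr ‖y.1.1‖, rr_mem (norm_nonneg _)⟩

lemma continuous_tau : Continuous (tau (n := n)) := by
  apply Continuous.subtype_mk
  apply Continuous.div
  · exact (continuous_fst.comp continuous_subtype_val).norm
  · exact continuous_const.add (continuous_fst.comp continuous_subtype_val).norm
  · intro y; positivity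

noncomputable def yToCone (n : ℕ) (hn : 1 ≤ n) (y : Y n) : OpenCone (Sph n × Sph n) :=
  if h : y.1.1 = 0 then Quot.mk _ (⟨0, by simp⟩, (pt n hn, pt n hn))
  else Quot.mk _ (tau y,
    (⟨‖y.1.1‖⁻¹ • y.1.1, mem_sphere' (by
        simp [norm_smul, inv_mul_cancel₀ (norm_ne_zero_iff.2 h)])⟩,
     ⟨‖y.1.2‖⁻¹ • y.1.2, mem_sphere' (by
        have h2 : y.1.2 ≠ 0 := fun hz => h (by rw [← norm_eq_zero, y.2, hz, norm_zero])
        simp [norm_smul, inv_mul_cancel₀ (norm_ne_zero_iff.2 h2)])⟩))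

lemma yToCone_pos (y : Y n) (h : y.1.1 = 0) :
    yToCone n hn y = Quot.mk _ (⟨0, by simp⟩, (pt n hn, pt n hn)) := by
  rw [yToCone]; exact dif_pos h

lemma yToCone_neg (y : Y n) (h : ¬ y.1.1 = 0) :
    yToCone n hn y = Quot.mk _ (tau y,
      (⟨‖y.1.1‖⁻¹ • y.1.1, mem_sphere' (by
          simp [norm_smul, inv_mul_cancel₀ (norm_ne_zero_iff.2 h)])⟩,
       ⟨‖y.1.2‖⁻¹ • y.1.2, mem_sphere' (by
          have h2 : y.1.2 ≠ 0 := fun hz => h (by rw [← norm_eq_zero, y.2, hz, norm_zero])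
          simp [norm_smul, inv_mul_cancel₀ (norm_ne_zero_iff.2 h2)])⟩)) := by
  rw [yToCone]; exact dif_neg h

lemma yToCone_coneToY (q : OpenCone (Sph n × Sph n)) : yToCone n hn (coneToY q) = q := by
  induction q using Quot.ind with
  | _ a =>
    rcases a with ⟨t, a, b⟩
    by_cases ht : t.1 = 0
    · rw [show coneToY (Quot.mk _ (t, a, b)) = coneFun (t, a, b) from rfl]
      have hz : (coneFun (t, a, b)).1.1 = 0 := by simp [coneFun, ht, cc]
      rw [yToCone_pos hn _ hz]
      exact Quot.sound (Or.inl ⟨rfl, ht⟩)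
    · rw [show coneToY (Quot.mk _ (t, a, b)) = coneFun (t, a, b) from rfl]
      have hcpos : 0 < cc t.1 := cc_pos t.2 ht
      have hz : (coneFun (t, a, b)).1.1 ≠ 0 := by
        simp only [coneFun]
        intro h
        have : ‖cc t.1 • (a : E n)‖ = 0 := by rw [h, norm_zero]
        rw [norm_smul, norm_of_sphere, mul_one, Real.norm_eq_abs,
          abs_of_pos hcpos] at this
        exact hcpos.ne' this
      rw [yToCone_neg hn _ hz]
      congr 1
      have hnorm : ‖(coneFun (t, a, b)).1.1‖ = cc t.1 := by
        simp [coneFun, norm_smul, norm_of_sphere, Real.norm_eq_abs, abs_of_pos hcpos]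
      refine Prod.ext (Subtype.ext ?_) (Prod.ext (Subtype.ext ?_) (Subtype.ext ?_))
      · simp only [tau, hnorm]
        exact rr_cc t.2
      · show ‖(coneFun (t, a, b)).1.1‖⁻¹ • (coneFun (t, a, b)).1.1 = (a : E n)
        rw [hnorm]
        show (cc t.1)⁻¹ • (cc t.1 • (a : E n)) = (a : E n)
        rw [smul_smul, inv_mul_cancel₀ hcpos.ne', one_smul]
      · show ‖(coneFun (t, a, b)).1.2‖⁻¹ • (coneFun (t, a, b)).1.2 = (b : E n)
        have hnorm2 : ‖(coneFun (t, a, b)).1.2‖ = cc t.1 := by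
          simp [coneFun, norm_smul, norm_of_sphere, Real.norm_eq_abs, abs_of_pos hcpos]
        rw [hnorm2]
        show (cc t.1)⁻¹ • (cc t.1 • (b : E n)) = (b : E n)
        rw [smul_smul, inv_mul_cancel₀ hcpos.ne', one_smul]

lemma coneToY_yToCone (y : Y n) : coneToY (yToCone n hn y) = y := by
  by_cases h : y.1.1 = 0
  · rw [yToCone_pos hn _ h]
    have h2 : y.1.2 = 0 := by rw [← norm_eq_zero, ← y.2, h, norm_zero]
    apply Subtype.ext
    show (cc 0 • _, cc 0 • _) = y.1
    rw [show cc 0 = 0 by simp [cc], zero_smul]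
    exact (Prod.ext h.symm h2.symm)
  · rw [yToCone_neg hn _ h]
    apply Subtype.ext
    show (cc (tau y).1 • (‖y.1.1‖⁻¹ • y.1.1), cc (tau y).1 • (‖y.1.2‖⁻¹ • y.1.2)) = y.1
    have hc : cc (tau y).1 = ‖y.1.1‖ := cc_rr (norm_nonneg _)
    rw [hc]
    have hn1 : ‖y.1.1‖ ≠ 0 := norm_ne_zero_iff.2 h
    have hn2 : ‖y.1.2‖ = ‖y.1.1‖ := y.2.symm
    refine Prod.ext ?_ ?_
    · rw [smul_smul, mul_inv_cancel₀ hn1, one_smul]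
    · dsimp only
      rw [hn2, smul_smul, mul_inv_cancel₀ hn1, one_smul]


noncomputable def gAux (n : ℕ) : {y : Y n | (y : (E n × E n)).1 ≠ 0} → OpenCone (Sph n × Sph n) :=
  fun z => Quot.mk _ (tau z.1,
    (⟨‖z.1.1.1‖⁻¹ • z.1.1.1, mem_sphere' (by
        simp [norm_smul, inv_mul_cancel₀ (norm_ne_zero_iff.2 z.2)])⟩,
     ⟨‖z.1.1.2‖⁻¹ • z.1.1.2, mem_sphere' (by
        have h2 : z.1.1.2 ≠ 0 := fun hz => z.2 (by
          rw [← norm_eq_zero, z.1.2, hz, norm_zero])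
        simp [norm_smul, inv_mul_cancel₀ (norm_ne_zero_iff.2 h2)])⟩))

lemma gAux_eq (z : {y : Y n | (y : (E n × E n)).1 ≠ 0}) :
    yToCone n hn z.1 = gAux n z := by
  rw [yToCone_neg hn _ z.2]
  rfl

lemma continuous_gAux : Continuous (gAux n) := by
  have hu : Continuous fun z : {y : Y n | (y : (E n × E n)).1 ≠ 0} => z.1.1.1 :=
    continuous_fst.comp (continuous_subtype_val.comp continuous_subtype_val)
  have hv : Continuous fun z : {y : Y n | (y : (E n × E n)).1 ≠ 0} => z.1.1.2 :=
    continuous_snd.comp (continuous_subtype_val.comp continuous_subtype_val)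
  have hun : ∀ z : {y : Y n | (y : (E n × E n)).1 ≠ 0}, ‖z.1.1.1‖ ≠ 0 :=
    fun z => norm_ne_zero_iff.2 z.2
  have hvn : ∀ z : {y : Y n | (y : (E n × E n)).1 ≠ 0}, ‖z.1.1.2‖ ≠ 0 := by
    intro z
    rw [← z.1.2]
    exact hun z
  apply continuous_quot_mk.comp
  refine Continuous.prodMk (continuous_tau.comp continuous_subtype_val) ?_
  refine Continuous.prodMk ?_ ?_
  · exact Continuous.subtype_mk ((hu.norm.inv₀ hun).smul hu) _
  · exact Continuous.subtype_mk ((hv.norm.inv₀ hvn).smul hv) _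

lemma continuous_yToCone : Continuous (yToCone n hn) := by
  rw [continuous_iff_continuousAt]
  intro y₀
  by_cases h0 : (y₀ : (E n × E n)).1 = 0
  · rw [ContinuousAt, Filter.tendsto_def]
    intro U hU
    obtain ⟨U', hU'sub, hU'open, hmem⟩ := mem_nhds_iff.1 hU
    set q : (Set.Ico (0:ℝ) 1) × (Sph n × Sph n) → OpenCone (Sph n × Sph n) := Quot.mk _
      with hq
    have hVopen : IsOpen (q ⁻¹' U') := hU'open.preimage continuous_quot_mk
    have hsub : ({(⟨0, by simp⟩ : Set.Ico (0:ℝ) 1)} : Set _) ×ˢ (univ : Set (Sph n × Sph n))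
        ⊆ q ⁻¹' U' := by
      rintro ⟨t, s⟩ ⟨ht, -⟩
      simp only [mem_singleton_iff] at ht
      have heq : q (t, s) = yToCone n hn y₀ := by
        rw [yToCone_pos hn _ h0]
        exact Quot.sound (Or.inl ⟨by rw [ht], rfl⟩)
      show q (t, s) ∈ U'
      rw [heq]
      exact hmem
    obtain ⟨W, W', hWopen, -, hW0, hWuniv, hWsub⟩ :=
      generalized_tube_lemma isCompact_singleton isCompact_univ hVopen hsub
    have htau0 : tau y₀ = ⟨0, by simp⟩ := by
      apply Subtype.ext
      simp [tau, rr, h0]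
    have htau : tau y₀ ∈ W := hW0 (by rw [htau0]; exact rfl)
    have hN : tau ⁻¹' W ∈ nhds y₀ := (hWopen.preimage continuous_tau).mem_nhds htau
    apply Filter.mem_of_superset hN
    intro y hy
    show yToCone n hn y ∈ U
    apply hU'sub
    by_cases hy0 : (y : (E n × E n)).1 = 0
    · rw [yToCone_pos hn _ hy0]
      exact hsub ⟨rfl, trivial⟩
    · rw [yToCone_neg hn _ hy0]
      exact hWsub ⟨hy, hWuniv trivial⟩
  · have hO : IsOpen {y : Y n | (y : (E n × E n)).1 ≠ 0} := by
      have hc : Continuous fun y : Y n => (y : (E n × E n)).1 :=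
        continuous_fst.comp continuous_subtype_val
      exact isOpen_ne.preimage hc
    have hres : ContinuousOn (yToCone n hn) {y : Y n | (y : (E n × E n)).1 ≠ 0} := by
      rw [continuousOn_iff_continuous_restrict]
      have heq : Set.domRestrict {y : Y n | (y : (E n × E n)).1 ≠ 0} (yToCone n hn) = gAux n := by
        funext z
        exact gAux_eq hn z
      rw [heq]
      exact continuous_gAux
    exact hres.continuousAt (hO.mem_nhds h0)

noncomputable def coneHomeo (n : ℕ) (hn : 1 ≤ n) : Y n ≃ₜ OpenCone (Sph n × Sph n) where
  toFun := yToCone n hn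
  invFun := coneToY
  left_inv := coneToY_yToCone hn
  right_inv := yToCone_coneToY hn
  continuous_toFun := continuous_yToCone hn
  continuous_invFun := continuous_coneToY


lemma fst_ne_zero (y : {p : E n × E n // ‖p.1‖ = ‖p.2‖ ∧ p ≠ 0}) : y.1.1 ≠ 0 := by
  intro h
  apply y.2.2
  have h2 : y.1.2 = 0 := by rw [← norm_eq_zero, ← y.2.1, h, norm_zero]
  exact Prod.ext h h2

noncomputable def punctHomeo (n : ℕ) :
    {p : E n × E n // ‖p.1‖ = ‖p.2‖ ∧ p ≠ 0} ≃ₜ Sph n × Sph n × Set.Ioi (0:ℝ) where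
  toFun y :=
    (⟨‖y.1.1‖⁻¹ • y.1.1, mem_sphere' (by
        simp [norm_smul, inv_mul_cancel₀ (norm_ne_zero_iff.2 (fst_ne_zero y))])⟩,
     ⟨‖y.1.2‖⁻¹ • y.1.2, mem_sphere' (by
        have h2 : ‖y.1.2‖ ≠ 0 := y.2.1 ▸ norm_ne_zero_iff.2 (fst_ne_zero y)
        simp [norm_smul, inv_mul_cancel₀ h2])⟩,
     ⟨‖y.1.1‖, norm_pos_iff.2 (fst_ne_zero y)⟩)
  invFun q := ⟨(q.2.2.1 • (q.1 : E n), q.2.2.1 • (q.2.1 : E n)), by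
      simp [norm_smul, norm_of_sphere], by
      intro h
      have h1 : q.2.2.1 • (q.1 : E n) = 0 := congrArg Prod.fst h
      have h2 : (q.1 : E n) ≠ 0 := by
        intro hq
        have := norm_of_sphere (x := q.1)
        rw [hq, norm_zero] at this
        norm_num at this
      exact smul_ne_zero (ne_of_gt q.2.2.2) h2 h1⟩
  left_inv y := by
    apply Subtype.ext
    have hn1 : ‖y.1.1‖ ≠ 0 := norm_ne_zero_iff.2 (fst_ne_zero y)
    have hn2 : ‖y.1.2‖ = ‖y.1.1‖ := y.2.1.symm
    refine Prod.ext ?_ ?_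
    · show ‖y.1.1‖ • ‖y.1.1‖⁻¹ • y.1.1 = y.1.1
      rw [smul_smul, mul_inv_cancel₀ hn1, one_smul]
    · show ‖y.1.1‖ • ‖y.1.2‖⁻¹ • y.1.2 = y.1.2
      rw [hn2, smul_smul, mul_inv_cancel₀ hn1, one_smul]
  right_inv q := by
    have h2 : (q.1 : E n) ≠ 0 := by
      intro hq
      have := norm_of_sphere (x := q.1)
      rw [hq, norm_zero] at this
      norm_num at this
    have ht : (0:ℝ) < q.2.2.1 := q.2.2.2
    have hnorm : ‖q.2.2.1 • (q.1 : E n)‖ = q.2.2.1 := by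
      rw [norm_smul, norm_of_sphere, mul_one, Real.norm_eq_abs, abs_of_pos ht]
    have hnorm2 : ‖q.2.2.1 • (q.2.1 : E n)‖ = q.2.2.1 := by
      rw [norm_smul, norm_of_sphere, mul_one, Real.norm_eq_abs, abs_of_pos ht]
    refine Prod.ext (Subtype.ext ?_) (Prod.ext (Subtype.ext ?_) (Subtype.ext ?_))
    · show ‖q.2.2.1 • (q.1 : E n)‖⁻¹ • (q.2.2.1 • (q.1 : E n)) = (q.1 : E n)
      rw [hnorm, smul_smul, inv_mul_cancel₀ ht.ne', one_smul]
    · show ‖q.2.2.1 • (q.2.1 : E n)‖⁻¹ • (q.2.2.1 • (q.2.1 : E n)) = (q.2.1 : E n)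
      rw [hnorm2, smul_smul, inv_mul_cancel₀ ht.ne', one_smul]
    · exact hnorm
  continuous_toFun := by
    have hu : Continuous fun y : {p : E n × E n // ‖p.1‖ = ‖p.2‖ ∧ p ≠ 0} => y.1.1 :=
      continuous_fst.comp continuous_subtype_val
    have hv : Continuous fun y : {p : E n × E n // ‖p.1‖ = ‖p.2‖ ∧ p ≠ 0} => y.1.2 :=
      continuous_snd.comp continuous_subtype_val
    have hun : ∀ y : {p : E n × E n // ‖p.1‖ = ‖p.2‖ ∧ p ≠ 0}, ‖y.1.1‖ ≠ 0 :=
      fun y => norm_ne_zero_iff.2 (fst_ne_zero y)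
    have hvn : ∀ y : {p : E n × E n // ‖p.1‖ = ‖p.2‖ ∧ p ≠ 0}, ‖y.1.2‖ ≠ 0 :=
      fun y => y.2.1 ▸ hun y
    refine Continuous.prodMk ?_ (Continuous.prodMk ?_ ?_)
    · exact Continuous.subtype_mk ((hu.norm.inv₀ hun).smul hu) _
    · exact Continuous.subtype_mk ((hv.norm.inv₀ hvn).smul hv) _
    · exact Continuous.subtype_mk hu.norm _
  continuous_invFun := by
    have ht : Continuous fun q : Sph n × Sph n × Set.Ioi (0:ℝ) => (q.2.2 : ℝ) :=
      continuous_subtype_val.comp (continuous_snd.comp continuous_snd)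
    have ha : Continuous fun q : Sph n × Sph n × Set.Ioi (0:ℝ) => (q.1 : E n) :=
      continuous_subtype_val.comp continuous_fst
    have hb : Continuous fun q : Sph n × Sph n × Set.Ioi (0:ℝ) => (q.2.1 : E n) :=
      continuous_subtype_val.comp (continuous_fst.comp continuous_snd)
    exact Continuous.subtype_mk ((ht.smul ha).prodMk (ht.smul hb)) _


def homeoSubtype {X Z : Type*} [TopologicalSpace X] [TopologicalSpace Z] (e : X ≃ₜ Z)
    {p : X → Prop} {q : Z → Prop} (h : ∀ x, p x ↔ q (e x)) : {x // p x} ≃ₜ {z // q z} where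
  toEquiv := e.toEquiv.subtypeEquiv h
  continuous_toFun := Continuous.subtype_mk (e.continuous.comp continuous_subtype_val) _
  continuous_invFun := Continuous.subtype_mk (e.symm.continuous.comp continuous_subtype_val) _

lemma ofUV_zero : ofUV (0 : E n × E n) = 0 := by
  funext k c
  cases k <;> cases c <;> simp [ofUV]

lemma matHomeo_eq_zero (M : Mat n) : matHomeo M = 0 ↔ M = 0 := by
  constructor
  · intro h
    have := congrArg (matHomeo (n := n)).symm h
    rw [Homeomorph.symm_apply_apply] at this
    rw [this]
    exact ofUV_zero
  · rintro rfl
    apply Prod.ext <;>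
    · ext x
      rcases x with i | i <;> simp [show ∀ M : Mat n, matHomeo M = toUV M from fun _ => rfl, toUV]

lemma isotropic_iff' (M : Mat n) :
    Mᵀ * Matrix.J (Fin n) ℝ * M = 0 ↔ ‖(matHomeo M).1‖ = ‖(matHomeo M).2‖ :=
  isotropic_iff M

end Stmt11

/-- The space `X(2,n,0)` ... -/
theorem stmt11 (n : ℕ) (hn : 1 ≤ n) :
    Nonempty
      ({M : Matrix (Fin n ⊕ Fin n) (Fin 1 ⊕ Fin 1) ℝ //
          Mᵀ * Matrix.J (Fin n) ℝ * M = 0}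
        ≃ₜ OpenCone (Metric.sphere (0 : EuclideanSpace ℝ (Fin n ⊕ Fin n)) 1
            × Metric.sphere (0 : EuclideanSpace ℝ (Fin n ⊕ Fin n)) 1))
      ∧ Nonempty
        ({M : Matrix (Fin n ⊕ Fin n) (Fin 1 ⊕ Fin 1) ℝ //
            Mᵀ * Matrix.J (Fin n) ℝ * M = 0 ∧ M ≠ 0}
          ≃ₜ Metric.sphere (0 : EuclideanSpace ℝ (Fin n ⊕ Fin n)) 1
              × Metric.sphere (0 : EuclideanSpace ℝ (Fin n ⊕ Fin n)) 1
              × Set.Ioi (0 : ℝ)) := by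
  constructor
  · exact ⟨(Stmt11.homeoSubtype Stmt11.matHomeo
      (fun M => Stmt11.isotropic_iff' M)).trans (Stmt11.coneHomeo n hn)⟩
  · refine ⟨(Stmt11.homeoSubtype Stmt11.matHomeo
      (q := fun p => ‖p.1‖ = ‖p.2‖ ∧ p ≠ 0) ?_).trans (Stmt11.punctHomeo n)⟩
    intro M
    exact and_congr (Stmt11.isotropic_iff' M)
      (not_congr (Stmt11.matHomeo_eq_zero M).symm)
end

section
/- Let V be a d-dimensional subspace of ℝ^k (or ℂ^k), A = ℤ^k (resp. the Gaussian integer lattice), and ρ_V: 𝔽^k → V the orthogonal projection. Then rank(V ∩ A) = d if and only if rank(ρ_V(A)) = d (as abelian groups). -/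
/-- The standard lattice `ℤ^k ⊂ ℝ^k`. -/
noncomputable def intLattice (k : ℕ) : AddSubgroup (EuclideanSpace ℝ (Fin k)) :=
  AddSubgroup.closure (Set.range fun i : Fin k => EuclideanSpace.single i (1 : ℝ))

open Module Submodule
noncomputable section
variable {k : ℕ}
def castE (k : ℕ) : (Fin k → ℚ) →ₗ[ℚ] EuclideanSpace ℝ (Fin k) where
  toFun x := (WithLp.equiv 2 _).symm (fun i => (x i : ℝ))
  map_add' x y := by ext i; simp [EuclideanSpace]
  map_smul' c x := by ext i; simp [EuclideanSpace, Rat.smul_def]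
@[simp] lemma castE_apply (x : Fin k → ℚ) (i : Fin k) : castE k x i = (x i : ℝ) := rfl
lemma castE_inj : Function.Injective (castE k) := by
  intro x y h
  ext i
  have : ((x i : ℝ)) = (y i : ℝ) := congrArg (fun v : EuclideanSpace ℝ (Fin k) => v i) h
  exact_mod_cast this

lemma sum_apply_E {ι : Type*} (s : Finset ι) (f : ι → EuclideanSpace ℝ (Fin k)) (i : Fin k) :
    (∑ j ∈ s, f j) i = ∑ j ∈ s, f j i := by
  simp

lemma linearIndependent_real_of_rat {ι : Type*} [Fintype ι] {v : ι → (Fin k → ℚ)}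
    (hv : LinearIndependent ℚ v) : LinearIndependent ℝ (fun j => castE k (v j)) := by
  classical
  set A : Matrix (Fin k) ι ℚ := Matrix.of fun i j => v j i with hA
  have hT : LinearMap.ker (Matrix.toLin' A) = ⊥ := by
    rw [LinearMap.ker_eq_bot']
    intro g hg
    rw [Fintype.linearIndependent_iff] at hv
    funext j
    refine hv g ?_ j
    funext i
    have := congrFun hg i
    simpa [Matrix.toLin'_apply, Matrix.mulVec, dotProduct, hA, mul_comm] using this
  obtain ⟨S, hS⟩ := LinearMap.exists_leftInverse_of_injective (Matrix.toLin' A) hT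
  set B : Matrix ι (Fin k) ℚ := LinearMap.toMatrix' S with hB
  have hBA : B * A = 1 := by
    have := congrArg LinearMap.toMatrix' hS
    rwa [LinearMap.toMatrix'_comp, LinearMap.toMatrix'_toLin', LinearMap.toMatrix'_id] at this
  -- cast to ℝ
  set f : ℚ →+* ℝ := Rat.castHom ℝ with hf
  have hBA' : (B.map f) * (A.map f) = 1 := by
    rw [← Matrix.map_mul, hBA]
    simp
  rw [Fintype.linearIndependent_iff]
  intro g hg
  have hAg : (A.map f).mulVec g = 0 := by
    funext i
    have := congrArg (fun v : EuclideanSpace ℝ (Fin k) => v i) hg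
    simp only [sum_apply_E] at this
    simpa [Matrix.mulVec, dotProduct, hA, mul_comm, Matrix.map_apply] using this
  have : g = 0 := by
    calc g = (1 : Matrix ι ι ℝ).mulVec g := (Matrix.one_mulVec g).symm
    _ = ((B.map f) * (A.map f)).mulVec g := by rw [hBA']
    _ = (B.map f).mulVec ((A.map f).mulVec g) := (Matrix.mulVec_mulVec _ _ _).symm
    _ = 0 := by rw [hAg, Matrix.mulVec_zero]
  intro i; exact congrFun this i

def latt (k : ℕ) : Submodule ℤ (EuclideanSpace ℝ (Fin k)) :=
  span ℤ (Set.range fun i : Fin k => EuclideanSpace.single i (1 : ℝ))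

lemma mem_latt_iff {x : EuclideanSpace ℝ (Fin k)} :
    x ∈ latt k ↔ ∃ n : Fin k → ℤ, x = castE k (fun i => (n i : ℚ)) := by
  classical
  constructor
  · intro hx
    induction hx using Submodule.span_induction with
    | mem x hx =>
      obtain ⟨i, rfl⟩ := hx
      refine ⟨Pi.single i 1, ?_⟩
      ext j
      simp only [EuclideanSpace.single_apply, castE_apply, Pi.single_apply]
      split <;> simp
    | zero => exact ⟨0, by ext j; simp⟩
    | add x y _ _ hx hy =>
      obtain ⟨n, rfl⟩ := hx; obtain ⟨m, rfl⟩ := hy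
      exact ⟨n + m, by ext j; push_cast; simp⟩
    | smul z x _ hx =>
      obtain ⟨n, rfl⟩ := hx
      refine ⟨z • n, ?_⟩
      ext j
      push_cast
      simp [zsmul_eq_mul]
  · rintro ⟨n, rfl⟩
    have : (castE k fun i => (n i : ℚ)) = ∑ i : Fin k, n i • EuclideanSpace.single i (1:ℝ) := by
      ext j
      rw [sum_apply_E]
      simp [EuclideanSpace.single_apply, eq_comm]
    rw [this]
    exact Submodule.sum_mem _ fun i _ =>
      Submodule.smul_of_tower_mem _ _ (Submodule.subset_span ⟨i, rfl⟩)

lemma li_single : LinearIndependent ℝ (fun i : Fin k => EuclideanSpace.single i (1 : ℝ)) := by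
  classical
  have := (EuclideanSpace.basisFun (Fin k) ℝ).toBasis.linearIndependent
  convert this using 1
  funext i
  rw [EuclideanSpace.basisFun_toBasis, PiLp.basisFun_apply]
  rfl
  rfl

lemma smul_one_int_inj : Function.Injective fun n : ℤ => n • (1 : ℝ) := by
  intro a b h
  simpa using h

lemma li_single_int : LinearIndependent ℤ (fun i : Fin k => EuclideanSpace.single i (1 : ℝ)) :=
  li_single.restrict_scalars smul_one_int_inj

noncomputable def lattBasis (k : ℕ) : Basis (Fin k) ℤ ↥(latt k) :=
  Basis.span li_single_int

instance : Module.Finite ℤ ↥(latt k) :=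
  Module.Finite.span_of_finite ℤ (Set.finite_range _)

instance : Module.Free ℤ ↥(latt k) := Module.Free.of_basis (lattBasis k)

instance : Module.IsTorsionFree ℤ (EuclideanSpace ℝ (Fin k)) := Module.IsTorsionFree.trans ℝ

lemma finrank_latt : Module.finrank ℤ ↥(latt k) = k := by
  simpa using Module.finrank_eq_card_basis (lattBasis k)

lemma finite_of_le_latt {p : Submodule ℤ (EuclideanSpace ℝ (Fin k))} (h : p ≤ latt k) :
    Module.Finite ℤ ↥p := by
  have : IsNoetherian ℤ ↥(latt k) := isNoetherian_of_isNoetherianRing_of_finite ℤ _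
  have hfg : (Submodule.comap (latt k).subtype p).FG := IsNoetherian.noetherian _
  have := Module.Finite.iff_fg.mpr hfg
  exact Module.Finite.equiv (Submodule.comapSubtypeEquivOfLe h)

lemma li_real_of_li_int {ι : Type*} [Fintype ι] {b : ι → EuclideanSpace ℝ (Fin k)}
    (hmem : ∀ j, b j ∈ latt k) (hli : LinearIndependent ℤ b) : LinearIndependent ℝ b := by
  choose n hn using fun j => mem_latt_iff.mp (hmem j)
  set w : ι → (Fin k → ℚ) := fun j i => (n j i : ℚ) with hw
  have hb : b = fun j => ((castE k).restrictScalars ℤ) (w j) := by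
    funext j; exact hn j
  have hliw : LinearIndependent ℤ w := by
    rw [hb] at hli
    exact LinearIndependent.of_comp _ hli
  have hliq : LinearIndependent ℚ w := hliw.localization (Rₛ := ℚ) (S := nonZeroDivisors ℤ)
  have := linearIndependent_real_of_rat (k := k) hliq
  rw [hb]
  exact this

lemma finrank_inf_latt_le (W : Submodule ℝ (EuclideanSpace ℝ (Fin k))) :
    Module.finrank ℤ ↥(W.restrictScalars ℤ ⊓ latt k) ≤ Module.finrank ℝ ↥W := by
  classical
  set p := W.restrictScalars ℤ ⊓ latt k with hp
  have hple : p ≤ latt k := inf_le_right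
  have hfin : Module.Finite ℤ ↥p := finite_of_le_latt hple
  have hfree : Module.Free ℤ ↥p := Module.free_of_finite_type_torsion_free'
  set c := Module.Free.chooseBasis ℤ ↥p with hc
  have hcard : Fintype.card (Module.Free.ChooseBasisIndex ℤ ↥p) = Module.finrank ℤ ↥p :=
    (Module.finrank_eq_card_chooseBasisIndex ℤ ↥p).symm
  -- the basis vectors, as elements of E
  have hliE : LinearIndependent ℤ (fun j => (c j : EuclideanSpace ℝ (Fin k))) :=
    c.linearIndependent.map' p.subtype (Submodule.ker_subtype p)
  have hmem : ∀ j, (c j : EuclideanSpace ℝ (Fin k)) ∈ latt k := fun j => hple (c j).2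
  have hliR : LinearIndependent ℝ (fun j => (c j : EuclideanSpace ℝ (Fin k))) :=
    li_real_of_li_int hmem hliE
  -- restrict to W
  have hmemW : ∀ j, (c j : EuclideanSpace ℝ (Fin k)) ∈ W := fun j => (c j).2.1
  set f : Module.Free.ChooseBasisIndex ℤ ↥p → ↥W := fun j => ⟨(c j : EuclideanSpace ℝ (Fin k)), hmemW j⟩ with hf
  have hliW : LinearIndependent ℝ f := by
    have : LinearIndependent ℝ (fun j => W.subtype (f j)) := hliR
    exact LinearIndependent.of_comp _ this
  have := hliW.fintype_card_le_finrank
  omega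

lemma exists_int_scale (x : Fin k → ℚ) :
    ∃ (z : ℤ) (nn : Fin k → ℤ), z ≠ 0 ∧ ∀ i, (z : ℚ) * x i = (nn i : ℚ) := by
  classical
  refine ⟨∏ i, ((x i).den : ℤ),
    fun i => (x i).num * ∏ j ∈ Finset.univ.erase i, ((x j).den : ℤ), ?_, ?_⟩
  · exact Finset.prod_ne_zero_iff.mpr fun i _ => by exact_mod_cast (x i).den_nz
  · intro i
    have h1 : (∏ j, ((x j).den : ℤ)) = ((x i).den : ℤ) * ∏ j ∈ Finset.univ.erase i, ((x j).den : ℤ) :=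
      (Finset.mul_prod_erase Finset.univ _ (Finset.mem_univ i)).symm
    rw [h1]
    push_cast
    have hd : ((x i).den : ℚ) ≠ 0 := by exact_mod_cast (x i).den_nz
    have key : (x i) * ((x i).den : ℚ) = ((x i).num : ℚ) :=
      ((div_eq_iff hd).mp (Rat.num_div_den (x i))).symm
    calc (((x i).den : ℚ) * ∏ j ∈ Finset.univ.erase i, ((x j).den : ℚ)) * x i
        = (x i * ((x i).den : ℚ)) * ∏ j ∈ Finset.univ.erase i, ((x j).den : ℚ) := by ring
      _ = ((x i).num : ℚ) * ∏ j ∈ Finset.univ.erase i, ((x j).den : ℚ) := by rw [key]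

lemma orthogonal_rational (W : Submodule ℝ (EuclideanSpace ℝ (Fin k)))
    (h : Module.finrank ℤ ↥(W.restrictScalars ℤ ⊓ latt k) = Module.finrank ℝ ↥W) :
    Module.finrank ℤ ↥(Wᗮ.restrictScalars ℤ ⊓ latt k) = Module.finrank ℝ ↥Wᗮ := by
  classical
  set d' := Module.finrank ℝ ↥W with hd'
  set p := W.restrictScalars ℤ ⊓ latt k with hp
  have hple : p ≤ latt k := inf_le_right
  have hfin : Module.Finite ℤ ↥p := finite_of_le_latt hple
  have hfree : Module.Free ℤ ↥p := Module.free_of_finite_type_torsion_free'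
  set c := Module.Free.chooseBasis ℤ ↥p with hc
  set ι := Module.Free.ChooseBasisIndex ℤ ↥p with hι
  have hcard : Fintype.card ι = d' := by
    rw [← Module.finrank_eq_card_chooseBasisIndex ℤ ↥p, ← h]
  set b : ι → EuclideanSpace ℝ (Fin k) := fun j => (c j : EuclideanSpace ℝ (Fin k)) with hb
  have hliE : LinearIndependent ℤ b := c.linearIndependent.map' p.subtype (Submodule.ker_subtype p)
  have hmemL : ∀ j, b j ∈ latt k := fun j => hple (c j).2
  have hmemW : ∀ j, b j ∈ W := fun j => (c j).2.1
  have hliR : LinearIndependent ℝ b := li_real_of_li_int hmemL hliE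
  -- b spans W
  have hspan : Submodule.span ℝ (Set.range b) = W := by
    apply Submodule.eq_of_le_of_finrank_le
    · rw [Submodule.span_le]; rintro _ ⟨j, rfl⟩; exact hmemW j
    · rw [finrank_span_eq_card hliR, hcard]
  -- rational coordinates of b
  choose n hn using fun j => mem_latt_iff.mp (hmemL j)
  set w : ι → (Fin k → ℚ) := fun j i => (n j i : ℚ) with hw
  -- kernel over ℚ
  set M : Matrix ι (Fin k) ℚ := Matrix.of fun j i => w j i with hM
  have hKqrank : k - d' ≤ Module.finrank ℚ ↥(LinearMap.ker (Matrix.toLin' M)) := by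
    have h1 := LinearMap.finrank_range_add_finrank_ker (Matrix.toLin' M)
    have h2 : Module.finrank ℚ (Fin k → ℚ) = k := by simp
    have h3 : Module.finrank ℚ ↥(LinearMap.range (Matrix.toLin' M)) ≤ d' := by
      have h4 : Module.finrank ℚ ↥(LinearMap.range (Matrix.toLin' M)) ≤ Module.finrank ℚ (ι → ℚ) :=
        Submodule.finrank_le _
      simpa [hcard] using h4
    omega
  set Kq := LinearMap.ker (Matrix.toLin' M) with hKq
  set u := Module.Free.chooseBasis ℚ ↥Kq with hu
  set κ := Module.Free.ChooseBasisIndex ℚ ↥Kq with hκ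
  have hcardκ : Fintype.card κ = Module.finrank ℚ ↥Kq :=
    (Module.finrank_eq_card_chooseBasisIndex ℚ ↥Kq).symm
  set uq : κ → (Fin k → ℚ) := fun j => (u j : Fin k → ℚ) with huq
  have hliuq : LinearIndependent ℚ uq :=
    u.linearIndependent.map' Kq.subtype (Submodule.ker_subtype Kq)
  have hker : ∀ (j : κ) (j0 : ι), ∑ i, w j0 i * uq j i = 0 := by
    intro j j0
    have h5 : Matrix.toLin' M (uq j) = 0 := (u j).2
    rw [Matrix.toLin'_apply] at h5
    have h6 := congrFun h5 j0
    simpa [Matrix.mulVec, dotProduct, hM] using h6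
  -- scale kernel vectors to integer vectors
  choose z nn hz hnn using fun j => exists_int_scale (uq j)
  set r : κ → EuclideanSpace ℝ (Fin k) := fun j => castE k (fun i => (nn j i : ℚ)) with hr
  have hrz : ∀ j, r j = (z j : ℝ) • castE k (uq j) := by
    intro j
    ext i
    show ((nn j i : ℚ) : ℝ) = ((z j : ℝ) • castE k (uq j)) i
    have h7 : ((nn j i : ℚ) : ℝ) = ((z j : ℝ)) * ((uq j i : ℚ) : ℝ) := by
      exact_mod_cast (congrArg (fun q : ℚ => (q : ℝ)) (hnn j i)).symm
    rw [h7]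
    rfl
  have hrmemL : ∀ j, r j ∈ latt k := fun j => mem_latt_iff.mpr ⟨nn j, rfl⟩
  have hmemO : ∀ j, r j ∈ Wᗮ := by
    intro j
    rw [hrz j]
    refine Submodule.smul_mem _ _ ?_
    rw [Submodule.mem_orthogonal]
    rw [← hspan]
    intro y hy
    induction hy using Submodule.span_induction with
    | mem y hy =>
      obtain ⟨j0, rfl⟩ := hy
      have hb0 : b j0 = castE k (w j0) := hn j0
      rw [hb0]
      simp only [PiLp.inner_apply, RCLike.inner_apply, conj_trivial, castE_apply]
      have h8 := hker j j0
      have : ((∑ i, w j0 i * uq j i : ℚ) : ℝ) = 0 := by rw [h8]; simp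
      push_cast at this
      convert this using 1
      exact Finset.sum_congr rfl fun _ _ => mul_comm _ _
    | zero => simp
    | add a b' _ _ ha hb' => rw [inner_add_left, ha, hb']; simp
    | smul t a _ ha => rw [inner_smul_left, ha]; simp
  have hliuqR : LinearIndependent ℝ (fun j => castE k (uq j)) := linearIndependent_real_of_rat hliuq
  set zu : κ → ℝˣ := fun j => Units.mk0 (z j : ℝ) (by exact_mod_cast hz j) with hzu
  have hliR' : LinearIndependent ℝ r := by
    have h9 := hliuqR.units_smul zu
    have : r = zu • fun j => castE k (uq j) := by
      funext j
      rw [hrz j]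
      rfl
    rwa [this]
  have hliZ : LinearIndependent ℤ r := hliR'.restrict_scalars smul_one_int_inj
  set P' := Wᗮ.restrictScalars ℤ ⊓ latt k with hP'
  have hmemP' : ∀ j, r j ∈ P' := fun j => ⟨hmemO j, hrmemL j⟩
  set rr : κ → ↥P' := fun j => ⟨r j, hmemP' j⟩ with hrr
  have hlirr : LinearIndependent ℤ rr := by
    refine LinearIndependent.of_comp P'.subtype ?_
    exact hliZ
  have hfinP' : Module.Finite ℤ ↥P' := finite_of_le_latt inf_le_right
  have hlow := hlirr.fintype_card_le_finrank
  have hlow' : Module.finrank ℚ ↥Kq ≤ Module.finrank ℤ ↥P' := hcardκ ▸ hlow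
  have hub : Module.finrank ℤ ↥P' ≤ Module.finrank ℝ ↥Wᗮ := finrank_inf_latt_le (k := k) Wᗮ
  have horth : Module.finrank ℝ ↥Wᗮ = k - d' := by
    have h10 := Submodule.finrank_add_finrank_orthogonal W
    have hE : Module.finrank ℝ (EuclideanSpace ℝ (Fin k)) = k := finrank_euclideanSpace_fin
    omega
  omega

lemma proj_rank_add (V : Submodule ℝ (EuclideanSpace ℝ (Fin k))) :
    Module.finrank ℤ ↥(Submodule.map
        (((Submodule.orthogonalProjectionOnto V : EuclideanSpace ℝ (Fin k) →L[ℝ] V)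
          : EuclideanSpace ℝ (Fin k) →ₗ[ℝ] V).restrictScalars ℤ) (latt k))
      + Module.finrank ℤ ↥(Vᗮ.restrictScalars ℤ ⊓ latt k) = k := by
  classical
  set ρl : EuclideanSpace ℝ (Fin k) →ₗ[ℝ] ↥V :=
    ((Submodule.orthogonalProjectionOnto V : EuclideanSpace ℝ (Fin k) →L[ℝ] V)
      : EuclideanSpace ℝ (Fin k) →ₗ[ℝ] V) with hρl
  set f : ↥(latt k) →ₗ[ℤ] ↥V := (ρl.restrictScalars ℤ) ∘ₗ (latt k).subtype with hf
  have hrange : LinearMap.range f = Submodule.map (ρl.restrictScalars ℤ) (latt k) := by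
    rw [hf, LinearMap.range_comp, Submodule.range_subtype]
  have hkerρ : LinearMap.ker (ρl.restrictScalars ℤ) = Vᗮ.restrictScalars ℤ := by
    ext x
    simp only [LinearMap.mem_ker, LinearMap.restrictScalars_apply, Submodule.restrictScalars_mem]
    exact Submodule.orthogonalProjectionOnto_eq_zero_iff
  have hker : LinearMap.ker f =
      Submodule.comap (latt k).subtype (Vᗮ.restrictScalars ℤ ⊓ latt k) := by
    rw [hf, LinearMap.ker_comp, hkerρ, Submodule.comap_inf, Submodule.comap_subtype_self]
    simp
  have eker : ↥(LinearMap.ker f) ≃ₗ[ℤ] ↥(Vᗮ.restrictScalars ℤ ⊓ latt k) := by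
    rw [hker]
    exact Submodule.comapSubtypeEquivOfLe inf_le_right
  have e1 := LinearMap.rank_range_add_rank_ker f
  have hfinL : Module.Finite ℤ ↥(latt k) := inferInstance
  have hfinrange : Module.Finite ℤ ↥(LinearMap.range f) := Module.Finite.range f
  have hfreerange : Module.Free ℤ ↥(LinearMap.range f) := Module.free_of_finite_type_torsion_free'
  have hfinker0 : Module.Finite ℤ ↥(Vᗮ.restrictScalars ℤ ⊓ latt k) := finite_of_le_latt inf_le_right
  have hfinker : Module.Finite ℤ ↥(LinearMap.ker f) := Module.Finite.equiv eker.symm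
  have hfreeker : Module.Free ℤ ↥(LinearMap.ker f) := Module.free_of_finite_type_torsion_free'
  have hr1 : Module.rank ℤ ↥(LinearMap.range f) = (Module.finrank ℤ ↥(LinearMap.range f) : Cardinal) :=
    (Module.finrank_eq_rank ℤ _).symm
  have hr2 : Module.rank ℤ ↥(LinearMap.ker f) = (Module.finrank ℤ ↥(LinearMap.ker f) : Cardinal) :=
    (Module.finrank_eq_rank ℤ _).symm
  have hr3 : Module.rank ℤ ↥(latt k) = (k : Cardinal) := by
    rw [← Module.finrank_eq_rank ℤ, finrank_latt]
  rw [hr1, hr2, hr3] at e1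
  have e2 : Module.finrank ℤ ↥(LinearMap.range f) + Module.finrank ℤ ↥(LinearMap.ker f) = k := by
    exact_mod_cast e1
  rw [hrange] at e2
  rw [eker.finrank_eq] at e2
  exact e2

lemma finrank_addSubgroup {M : Type*} [AddCommGroup M] (H : AddSubgroup M) :
    Module.finrank ℤ ↥H = Module.finrank ℤ ↥(AddSubgroup.toIntSubmodule H) := by
  have e : ↥H ≃+ ↥(AddSubgroup.toIntSubmodule H) :=
    { toFun := fun x => ⟨x.1, x.2⟩
      invFun := fun x => ⟨x.1, x.2⟩
      left_inv := fun x => rfl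
      right_inv := fun x => rfl
      map_add' := fun x y => rfl }
  exact e.toIntLinearEquiv.finrank_eq

lemma toIntSubmodule_intLattice : AddSubgroup.toIntSubmodule (intLattice k) = latt k := by
  rw [intLattice, ← Submodule.span_int_eq_addSubgroupClosure, Submodule.toAddSubgroup_toIntSubmodule]
  rfl

lemma mem_intLattice_iff_latt {x : EuclideanSpace ℝ (Fin k)} : x ∈ intLattice k ↔ x ∈ latt k := by
  rw [← toIntSubmodule_intLattice]
  rfl

lemma toIntSubmodule_inf (V : Submodule ℝ (EuclideanSpace ℝ (Fin k))) :
    AddSubgroup.toIntSubmodule (V.toAddSubgroup ⊓ intLattice k)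
      = V.restrictScalars ℤ ⊓ latt k := by
  ext x
  have h1 : x ∈ AddSubgroup.toIntSubmodule (V.toAddSubgroup ⊓ intLattice k) ↔
      x ∈ V.toAddSubgroup ⊓ intLattice k := Iff.rfl
  rw [h1, AddSubgroup.mem_inf, Submodule.mem_inf, Submodule.mem_toAddSubgroup,
    Submodule.restrictScalars_mem, mem_intLattice_iff_latt]

lemma toIntSubmodule_map (V : Submodule ℝ (EuclideanSpace ℝ (Fin k))) :
    AddSubgroup.toIntSubmodule
        (AddSubgroup.map
          (((Submodule.orthogonalProjectionOnto V : EuclideanSpace ℝ (Fin k) →L[ℝ] V)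
            : EuclideanSpace ℝ (Fin k) →ₗ[ℝ] V).toAddMonoidHom) (intLattice k))
      = Submodule.map
          (((Submodule.orthogonalProjectionOnto V : EuclideanSpace ℝ (Fin k) →L[ℝ] V)
            : EuclideanSpace ℝ (Fin k) →ₗ[ℝ] V).restrictScalars ℤ) (latt k) := by
  ext x
  have h1 : x ∈ AddSubgroup.toIntSubmodule (AddSubgroup.map _ (intLattice k)) ↔
      x ∈ AddSubgroup.map
        (((Submodule.orthogonalProjectionOnto V : EuclideanSpace ℝ (Fin k) →L[ℝ] V)
            : EuclideanSpace ℝ (Fin k) →ₗ[ℝ] V).toAddMonoidHom) (intLattice k) := Iff.rfl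
  rw [h1, AddSubgroup.mem_map, Submodule.mem_map]
  constructor
  · rintro ⟨y, hy, rfl⟩
    exact ⟨y, mem_intLattice_iff_latt.mp hy, rfl⟩
  · rintro ⟨y, hy, rfl⟩
    exact ⟨y, mem_intLattice_iff_latt.mpr hy, rfl⟩

/-- Let `V` be a `d`-dimensional subspace of `ℝ^k`, `A = ℤ^k` the standard lattice and
`ρ_V : ℝ^k → V` the orthogonal projection.  Then `V ∩ A` has rank `d` (as an abelian group)
if and only if `ρ_V(A)` has rank `d`. -/
theorem stmt17 (k d : ℕ) (V : Submodule ℝ (EuclideanSpace ℝ (Fin k)))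
    (hV : Module.finrank ℝ ↥V = d) :
    Module.finrank ℤ ↥(V.toAddSubgroup ⊓ intLattice k) = d ↔
      Module.finrank ℤ
        ↥(AddSubgroup.map
            ((Submodule.orthogonalProjectionOnto V : EuclideanSpace ℝ (Fin k) →L[ℝ] V)
              : EuclideanSpace ℝ (Fin k) →ₗ[ℝ] V).toAddMonoidHom
            (intLattice k)) = d := by
  rw [finrank_addSubgroup, toIntSubmodule_inf, finrank_addSubgroup, toIntSubmodule_map]
  have hQ := proj_rank_add V
  have hE : Module.finrank ℝ (EuclideanSpace ℝ (Fin k)) = k := finrank_euclideanSpace_fin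
  have horth : Module.finrank ℝ ↥V + Module.finrank ℝ ↥Vᗮ = k := by
    rw [Submodule.finrank_add_finrank_orthogonal, hE]
  constructor
  · intro h
    have hP := orthogonal_rational V (by rw [h, hV])
    omega
  · intro h
    have hpre : Module.finrank ℤ ↥(Vᗮ.restrictScalars ℤ ⊓ latt k) = Module.finrank ℝ ↥Vᗮ := by
      omega
    have hP := orthogonal_rational Vᗮ hpre
    rw [Submodule.orthogonal_orthogonal] at hP
    rw [hP, hV]

end
end
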